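/- arXiv:2604.07178 — 7 statements merged into one kernel-verified Lean document; each statement's English description precedes it below -/
import Mathlib

section
/- For every integer k ≥ 1 and n = 2^k, there exists a depth-k 1D-QAC circuit C on exactly n qubits (no ancilla qubits) such that C|0^n⟩ = (|0^n⟩ + |1^n⟩)/√2, the n-qubit cat state. -/
/-- A layer of arbitrary single-qubit unitaries on qubits indexed by `ι`,
written as a matrix in the computational basis (indexed by `ι → Bool`):
the entrywise tensor product of single-qubit unitaries. -/
def IsSingleQubitLayer {ι : Type*} [Fintype ι] [DecidableEq ι]
    (L : Matrix (ι → Bool) (ι → Bool) ℂ) : Prop :=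
  ∃ u : ι → Matrix Bool Bool ℂ,
    (∀ i, u i ∈ Matrix.unitaryGroup Bool ℂ) ∧
    ∀ x y, L x y = ∏ i, u i (x i) (y i)

/-- A layer of CZ gates acting on pairwise disjoint supports, each support
required to satisfy the predicate `P`.  The CZ gate on a set `T` maps a basis
state `|x⟩` to `−|x⟩` if `x` is all ones on `T` and fixes it otherwise; a layer
is the corresponding diagonal matrix. -/
def IsCZLayer {ι : Type*} [Fintype ι] [DecidableEq ι] (P : Finset ι → Prop)
    (M : Matrix (ι → Bool) (ι → Bool) ℂ) : Prop :=
  ∃ 𝒯 : Finset (Finset ι),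
    (∀ T ∈ 𝒯, P T) ∧
    ((𝒯 : Set (Finset ι)).Pairwise fun T T' => Disjoint T T') ∧
    ∀ x y, M x y =
      if x = y then ∏ T ∈ 𝒯, (if ∀ i ∈ T, x i = true then (-1 : ℂ) else 1)
      else 0

/-- A depth-`d` QAC circuit whose CZ-gate supports are constrained by `P`:
`C = L_d · M_d ⋯ L_1 · M_1 · L_0` with `L_t` layers of single-qubit unitaries
and `M_t` layers of CZ gates on pairwise disjoint supports satisfying `P`. -/
def IsQACOn {ι : Type*} [Fintype ι] [DecidableEq ι] (P : Finset ι → Prop) :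
    ℕ → Matrix (ι → Bool) (ι → Bool) ℂ → Prop
  | 0, C => IsSingleQubitLayer C
  | d + 1, C => ∃ L M C', IsSingleQubitLayer L ∧ IsCZLayer P M ∧
      IsQACOn P d C' ∧ C = L * M * C'

/-- A contiguous interval of qubits on the line `Fin m`. -/
def IsInterval1D {m : ℕ} (T : Finset (Fin m)) : Prop :=
  ∀ a b c : Fin m, a ∈ T → c ∈ T → a ≤ b → b ≤ c → b ∈ T

/-- A depth-`d` 1D-QAC circuit on `m` qubits arranged on a line: every CZ gate
acts on a contiguous interval of qubits. -/
def Is1DQAC {m : ℕ} (d : ℕ) (C : Matrix (Fin m → Bool) (Fin m → Bool) ℂ) :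
    Prop :=
  IsQACOn IsInterval1D d C
noncomputable section CatInfra

open Finset

/-- `1/√2` as a complex number. -/
def sc : ℂ := 1 / (Real.sqrt 2 : ℂ)

lemma sc_mul_sc : sc * sc = 1 / 2 := by
  have h : (Real.sqrt 2 : ℝ) * Real.sqrt 2 = 2 := Real.mul_self_sqrt (by norm_num)
  have h2 : ((Real.sqrt 2 : ℝ) : ℂ) * ((Real.sqrt 2 : ℝ) : ℂ) = 2 := by
    norm_cast
  rw [sc, div_mul_div_comm, one_mul, h2]

lemma conj_sc : (starRingEnd ℂ) sc = sc := by
  simp [sc, map_div₀, Complex.conj_ofReal]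

/-- Hadamard gate. -/
def Hm : Matrix Bool Bool ℂ := fun a b => if a && b then -sc else sc

/-- Pauli X gate. -/
def Xm : Matrix Bool Bool ℂ := fun a b => if a = b then 0 else 1

lemma Hm_mem : Hm ∈ Matrix.unitaryGroup Bool ℂ := by
  rw [Matrix.mem_unitaryGroup_iff]
  ext a b
  simp only [Matrix.mul_apply, Matrix.star_apply, Fintype.sum_bool, Hm, Matrix.one_apply]
  have := sc_mul_sc
  have hsq : sc ^ 2 = 1 / 2 := by rw [sq, sc_mul_sc]
  cases a <;> cases b <;> simp [conj_sc, map_neg] <;> ring_nf <;>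
    rw [hsq] <;> norm_num

lemma Xm_mem : Xm ∈ Matrix.unitaryGroup Bool ℂ := by
  rw [Matrix.mem_unitaryGroup_iff]
  ext a b
  simp only [Matrix.mul_apply, Matrix.star_apply, Fintype.sum_bool, Xm, Matrix.one_apply]
  cases a <;> cases b <;> simp

variable {ι : Type*} [Fintype ι] [DecidableEq ι]

/-- The tensor-product layer of single-qubit gates. -/
def layer (u : ι → Matrix Bool Bool ℂ) : Matrix (ι → Bool) (ι → Bool) ℂ :=
  fun x y => ∏ i, u i (x i) (y i)

lemma isSingleQubitLayer_layer {u : ι → Matrix Bool Bool ℂ}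
    (hu : ∀ i, u i ∈ Matrix.unitaryGroup Bool ℂ) : IsSingleQubitLayer (layer u) :=
  ⟨u, hu, fun _ _ => rfl⟩

lemma IsSingleQubitLayer.eq_layer {L : Matrix (ι → Bool) (ι → Bool) ℂ}
    (h : IsSingleQubitLayer L) :
    ∃ u : ι → Matrix Bool Bool ℂ, (∀ i, u i ∈ Matrix.unitaryGroup Bool ℂ) ∧ L = layer u := by
  obtain ⟨u, hu, h⟩ := h
  exact ⟨u, hu, by ext x y; exact h x y⟩

lemma layer_mul (u w : ι → Matrix Bool Bool ℂ) :
    layer u * layer w = layer (fun i => u i * w i) := by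
  ext x y
  simp only [Matrix.mul_apply, layer]
  rw [Finset.prod_univ_sum (fun _ => (Finset.univ : Finset Bool))]
  rw [Fintype.piFinset_univ]
  exact Finset.sum_congr rfl fun g _ => (Finset.prod_mul_distrib).symm

lemma IsSingleQubitLayer.mul {L L' : Matrix (ι → Bool) (ι → Bool) ℂ}
    (h : IsSingleQubitLayer L) (h' : IsSingleQubitLayer L') :
    IsSingleQubitLayer (L * L') := by
  obtain ⟨u, hu, rfl⟩ := h.eq_layer
  obtain ⟨w, hw, rfl⟩ := h'.eq_layer
  rw [layer_mul]
  exact isSingleQubitLayer_layer fun i => mul_mem (hu i) (hw i)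

lemma IsQACOn.mul_layer {P : Finset ι → Prop} {d : ℕ}
    {C L : Matrix (ι → Bool) (ι → Bool) ℂ}
    (hC : IsQACOn P d C) (hL : IsSingleQubitLayer L) : IsQACOn P d (C * L) := by
  induction d generalizing C with
  | zero => exact IsSingleQubitLayer.mul hC hL
  | succ d ih =>
      obtain ⟨L', M, C', hL', hM, hC', rfl⟩ := hC
      exact ⟨L', M, C' * L, hL', hM, ih hC', by
        rw [mul_assoc, mul_assoc]⟩

lemma IsQACOn.layer_mul {P : Finset ι → Prop} {d : ℕ}
    {C L : Matrix (ι → Bool) (ι → Bool) ℂ}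
    (hC : IsQACOn P d C) (hL : IsSingleQubitLayer L) : IsQACOn P d (L * C) := by
  cases d with
  | zero => exact IsSingleQubitLayer.mul hL hC
  | succ d =>
      obtain ⟨L', M, C', hL', hM, hC', rfl⟩ := hC
      exact ⟨L * L', M, C', IsSingleQubitLayer.mul hL hL', hM, hC', by
        rw [← mul_assoc, ← mul_assoc]⟩

/-- The phase function of a CZ layer. -/
def czfun (𝒯 : Finset (Finset ι)) (x : ι → Bool) : ℂ :=
  ∏ T ∈ 𝒯, (if ∀ i ∈ T, x i = true then (-1 : ℂ) else 1)

/-- The diagonal matrix of a CZ layer. -/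
def czmat (𝒯 : Finset (Finset ι)) : Matrix (ι → Bool) (ι → Bool) ℂ :=
  fun x y => if x = y then czfun 𝒯 x else 0

lemma isCZLayer_czmat {P : Finset ι → Prop} {𝒯 : Finset (Finset ι)}
    (h1 : ∀ T ∈ 𝒯, P T)
    (h2 : (𝒯 : Set (Finset ι)).Pairwise fun T T' => Disjoint T T') :
    IsCZLayer P (czmat 𝒯) :=
  ⟨𝒯, h1, h2, fun _ _ => rfl⟩

lemma czmat_mulVec (𝒯 : Finset (Finset ι)) (v : (ι → Bool) → ℂ) :
    (czmat 𝒯).mulVec v = fun x => czfun 𝒯 x * v x := by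
  funext x
  simp only [Matrix.mulVec, dotProduct, czmat, ite_mul, zero_mul]
  rw [Finset.sum_ite_eq Finset.univ x (fun y => czfun 𝒯 x * v y)]
  simp

lemma layer_mulVec (u : ι → Matrix Bool Bool ℂ) (v : (ι → Bool) → ℂ) :
    (layer u).mulVec v = fun x => ∑ y : ι → Bool, (∏ i, u i (x i) (y i)) * v y := rfl

lemma layer_mulVec_basis (u : ι → Matrix Bool Bool ℂ) (a : ι → Bool) :
    (layer u).mulVec (fun x => if x = a then 1 else 0) =
      fun z => ∏ i, u i (z i) (a i) := by
  funext z
  rw [layer_mulVec]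
  simp [Finset.sum_ite_eq']

lemma prod_ite_one_zero {p : ι → Prop} [DecidablePred p] :
    (∏ i, if p i then (1 : ℂ) else 0) = if ∀ i, p i then 1 else 0 := by
  by_cases h : ∀ i, p i
  · simp [h]
  · rw [if_neg h]
    push_neg at h
    obtain ⟨i, hi⟩ := h
    exact Finset.prod_eq_zero (Finset.mem_univ i) (by simp [hi])

end CatInfra
noncomputable section EvenOdd

open Finset

variable {n : ℕ}

/-- Even position. -/
def dd (i : Fin n) : Fin (2 * n) := ⟨2 * i.val, by omega⟩
/-- Odd position. -/
def ds (i : Fin n) : Fin (2 * n) := ⟨2 * i.val + 1, by omega⟩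

/-- Even/odd splitting of the line. -/
def se : (Fin n) ⊕ (Fin n) ≃ Fin (2 * n) where
  toFun := Sum.elim dd ds
  invFun j := if j.val % 2 = 0 then .inl ⟨j.val / 2, by omega⟩ else .inr ⟨j.val / 2, by omega⟩
  left_inv x := by
    rcases x with i | i
    · simp only [Sum.elim_inl, dd]
      simp only [eq_true (show 2 * (i : ℕ) % 2 = 0 by omega), ↓reduceIte]
      congr 1
      exact Fin.ext (by simp only [Fin.val_mk]; omega)
    · simp only [Sum.elim_inr, ds]
      simp only [eq_false (show ¬ ((2 * (i : ℕ) + 1) % 2 = 0) by omega), ↓reduceIte]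
      congr 1
      exact Fin.ext (by simp only [Fin.val_mk]; omega)
  right_inv j := by
    by_cases h : j.val % 2 = 0
    · show Sum.elim dd ds (if (j:ℕ) % 2 = 0 then _ else _) = j
      rw [if_pos h]
      exact Fin.ext (by simp only [Sum.elim_inl, dd, Fin.val_mk]; omega)
    · show Sum.elim dd ds (if (j:ℕ) % 2 = 0 then _ else _) = j
      rw [if_neg h]
      exact Fin.ext (by simp only [Sum.elim_inr, ds, Fin.val_mk]; omega)

lemma se_inl (i : Fin n) : se (Sum.inl i) = dd i := rfl
lemma se_inr (i : Fin n) : se (Sum.inr i) = ds i := rfl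
lemma se_symm_dd (i : Fin n) : se.symm (dd i) = Sum.inl i := se.symm_apply_apply (Sum.inl i)
lemma se_symm_ds (i : Fin n) : se.symm (ds i) = Sum.inr i := se.symm_apply_apply (Sum.inr i)

lemma prod_split {M : Type*} [CommMonoid M] (f : Fin (2 * n) → M) :
    ∏ j, f j = ∏ i, (f (dd i) * f (ds i)) := by
  rw [← Equiv.prod_comp se f, Fintype.prod_sum_type, ← Finset.prod_mul_distrib]
  rfl

/-- Pairing of bit strings. -/
def pe : (Fin n → Bool × Bool) ≃ (Fin (2 * n) → Bool) where
  toFun g := fun j => Sum.elim (fun i => (g i).1) (fun i => (g i).2) (se.symm j)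
  invFun y := fun i => (y (dd i), y (ds i))
  left_inv g := by
    funext i
    simp [se_symm_dd, se_symm_ds]
  right_inv y := by
    funext j
    obtain ⟨x, rfl⟩ := se.surjective j
    rcases x with i | i <;> simp [se_inl, se_inr, se_symm_dd, se_symm_ds]

lemma pe_dd (g : Fin n → Bool × Bool) (i : Fin n) : pe g (dd i) = (g i).1 := by
  simp [pe, se_symm_dd]
lemma pe_ds (g : Fin n → Bool × Bool) (i : Fin n) : pe g (ds i) = (g i).2 := by
  simp [pe, se_symm_ds]

lemma sum_split (F : (Fin (2 * n) → Bool) → ℂ) :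
    ∑ y, F y = ∑ g : Fin n → Bool × Bool, F (pe g) :=
  (Equiv.sum_comp pe F).symm

lemma sum_prod_split (F : Fin n → Bool × Bool → ℂ) :
    ∑ g : Fin n → Bool × Bool, ∏ i, F i (g i) = ∏ i, ∑ p : Bool × Bool, F i p := by
  rw [Finset.prod_univ_sum (fun _ => (Finset.univ : Finset (Bool × Bool)))]
  rw [Fintype.piFinset_univ]

/-- A function on the doubled line determined by two halves. -/
lemma eq_forall_dd_ds (z : Fin (2 * n) → Bool) (v : Bool) :
    (z = fun _ => v) ↔ ∀ i, z (dd i) = v ∧ z (ds i) = v := by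
  constructor
  · rintro rfl i; exact ⟨rfl, rfl⟩
  · intro h
    funext j
    obtain ⟨x, rfl⟩ := se.surjective j
    rcases x with i | i
    · exact (h i).1
    · exact (h i).2

/-- Push a vector on `n` qubits forward to `2n` qubits (odd qubits all one). -/
def Pv (v : (Fin n → Bool) → ℂ) : (Fin (2 * n) → Bool) → ℂ :=
  fun y => if ∀ i, y (ds i) = true then v (fun i => y (dd i)) else 0

lemma Pv_pe (v : (Fin n → Bool) → ℂ) (g : Fin n → Bool × Bool) :
    Pv v (pe g) = if ∀ i, (g i).2 = true then v (fun i => (g i).1) else 0 := by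
  simp [Pv, pe_dd, pe_ds]

/-- Gates on even and odd positions. -/
def pgate (ue uo : Fin n → Matrix Bool Bool ℂ) : Fin (2 * n) → Matrix Bool Bool ℂ :=
  fun j => Sum.elim ue uo (se.symm j)

lemma pgate_dd (ue uo : Fin n → Matrix Bool Bool ℂ) (i : Fin n) :
    pgate ue uo (dd i) = ue i := by simp [pgate, se_symm_dd]
lemma pgate_ds (ue uo : Fin n → Matrix Bool Bool ℂ) (i : Fin n) :
    pgate ue uo (ds i) = uo i := by simp [pgate, se_symm_ds]

lemma pgate_mem {ue uo : Fin n → Matrix Bool Bool ℂ}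
    (he : ∀ i, ue i ∈ Matrix.unitaryGroup Bool ℂ)
    (ho : ∀ i, uo i ∈ Matrix.unitaryGroup Bool ℂ) (j : Fin (2 * n)) :
    pgate ue uo j ∈ Matrix.unitaryGroup Bool ℂ := by
  unfold pgate
  rcases se.symm j with i | i
  · exact he i
  · exact ho i

end EvenOdd
noncomputable section LiftLayer

open Finset

variable {n : ℕ}

lemma forall_eq_funext {α : Type*} [Fintype α] (f g : α → Bool) :
    (∀ i, f i = g i) ↔ f = g := ⟨funext, fun h i => by rw [h]⟩

lemma lifted_layer_mulVec (u : Fin n → Matrix Bool Bool ℂ) (v : (Fin n → Bool) → ℂ) :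
    (layer (pgate u (fun _ => 1))).mulVec (Pv v) = Pv ((layer u).mulVec v) := by
  funext y
  simp only [layer_mulVec]
  rw [sum_split (fun x => (∏ j, pgate u (fun _ => 1) j (y j) (x j)) * Pv v x)]
  have key : ∀ g : Fin n → Bool × Bool,
      (∏ j, pgate u (fun _ => 1) j (y j) (pe g j)) * Pv v (pe g) =
      (∏ i, u i (y (dd i)) (g i).1) *
        ((∏ i, if y (ds i) = (g i).2 then (1:ℂ) else 0) *
          (if ∀ i, (g i).2 = true then v (fun i => (g i).1) else 0)) := by
    intro g
    rw [prod_split (fun j => pgate u (fun _ => 1) j (y j) (pe g j))]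
    simp only [pgate_dd, pgate_ds, pe_dd, pe_ds, Matrix.one_apply, Pv_pe]
    rw [Finset.prod_mul_distrib, mul_assoc]
  simp only [key]
  -- now reindex g as a pair (a, b)
  rw [← Equiv.sum_comp (Equiv.arrowProdEquivProdArrow (Fin n) (fun _ => Bool) (fun _ => Bool)).symm]
  rw [Fintype.sum_prod_type]
  have hab : ∀ (a b : Fin n → Bool) (i : Fin n),
      ((Equiv.arrowProdEquivProdArrow (Fin n) (fun _ => Bool) (fun _ => Bool)).symm (a, b)) i = (a i, b i) :=
    fun a b i => rfl
  simp only [hab]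
  have inner : ∀ a : Fin n → Bool,
      (∑ b : Fin n → Bool, (∏ i, u i (y (dd i)) (a i)) *
        ((∏ i, if y (ds i) = b i then (1:ℂ) else 0) *
          (if ∀ i, b i = true then v a else 0))) =
      (∏ i, u i (y (dd i)) (a i)) *
        ((if ∀ i, y (ds i) = true then (1:ℂ) else 0) * v a) := by
    intro a
    rw [← Finset.mul_sum]
    congr 1
    have : ∀ b : Fin n → Bool,
        (∏ i, if y (ds i) = b i then (1:ℂ) else 0) = if (fun i => y (ds i)) = b then 1 else 0 := by
      intro b
      rw [prod_ite_one_zero (p := fun i => y (ds i) = b i)]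
      simp only [forall_eq_funext]
    simp only [this, ite_mul, one_mul, zero_mul]
    rw [Finset.sum_ite_eq Finset.univ (fun i => y (ds i))
      (fun b => if ∀ i, b i = true then v a else 0)]
    by_cases h : ∀ i, y (ds i) = true
    · simp [h]
    · simp [h]
  simp only [inner]
  by_cases h : ∀ i, y (ds i) = true
  · simp only [Pv, if_pos h, one_mul, layer_mulVec]
  · simp only [Pv, if_neg h, zero_mul, mul_zero, Finset.sum_const_zero]

end LiftLayer
noncomputable section LiftCZ

open Finset

variable {n : ℕ}

/-- Lift an interval on `Fin n` to the corresponding interval on `Fin (2n)`. -/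
def lift2 (T : Finset (Fin n)) : Finset (Fin (2 * n)) :=
  T.image dd ∪ (T.filter (fun i => ∃ i' ∈ T, (i' : ℕ) = i.val + 1)).image ds

lemma dd_ne_ds (i i' : Fin n) : dd i ≠ ds i' := by
  intro h
  have := congrArg Fin.val h
  simp only [dd, ds] at this
  omega

lemma dd_inj : Function.Injective (dd (n := n)) := by
  intro i i' h
  have := congrArg Fin.val h
  simp only [dd] at this
  exact Fin.ext (by omega)

lemma ds_inj : Function.Injective (ds (n := n)) := by
  intro i i' h
  have := congrArg Fin.val h
  simp only [ds] at this
  exact Fin.ext (by omega)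

lemma mem_lift2_dd {T : Finset (Fin n)} {i : Fin n} : dd i ∈ lift2 T ↔ i ∈ T := by
  simp only [lift2, Finset.mem_union, Finset.mem_image, Finset.mem_filter]
  constructor
  · rintro (⟨i', hi', heq⟩ | ⟨i', hi', heq⟩)
    · rwa [← dd_inj heq]
    · exact absurd heq.symm (dd_ne_ds i i')
  · intro h
    exact Or.inl ⟨i, h, rfl⟩

lemma mem_lift2_ds {T : Finset (Fin n)} {i : Fin n} :
    ds i ∈ lift2 T ↔ i ∈ T ∧ ∃ i' ∈ T, (i' : ℕ) = (i : ℕ) + 1 := by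
  simp only [lift2, Finset.mem_union, Finset.mem_image, Finset.mem_filter]
  constructor
  · rintro (⟨i', hi', heq⟩ | ⟨i', ⟨hi', hx⟩, heq⟩)
    · exact absurd heq (dd_ne_ds i' i)
    · rw [← ds_inj heq]; exact ⟨hi', hx⟩
  · rintro ⟨h1, h2⟩
    exact Or.inr ⟨i, ⟨h1, h2⟩, rfl⟩

lemma mem_lift2_elim {T : Finset (Fin n)} {j : Fin (2 * n)} (h : j ∈ lift2 T) :
    (∃ i ∈ T, j = dd i) ∨ (∃ i, i ∈ T ∧ j = ds i) := by
  simp only [lift2, Finset.mem_union, Finset.mem_image, Finset.mem_filter] at h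
  rcases h with ⟨i, hi, rfl⟩ | ⟨i, ⟨hi, _⟩, rfl⟩
  · exact Or.inl ⟨i, hi, rfl⟩
  · exact Or.inr ⟨i, hi, rfl⟩

lemma half_mem {T : Finset (Fin n)} {j : Fin (2 * n)} (h : j ∈ lift2 T) :
    (⟨(j : ℕ) / 2, by omega⟩ : Fin n) ∈ T := by
  rcases mem_lift2_elim h with ⟨i, hi, rfl⟩ | ⟨i, hi, rfl⟩
  · convert hi using 1
    exact Fin.ext (by simp only [dd, Fin.val_mk]; omega)
  · convert hi using 1
    exact Fin.ext (by simp only [ds, Fin.val_mk]; omega)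

lemma disjoint_lift2 {T T' : Finset (Fin n)} (h : Disjoint T T') :
    Disjoint (lift2 T) (lift2 T') := by
  rw [Finset.disjoint_left]
  intro j hj hj'
  exact (Finset.disjoint_left.mp h) (half_mem hj) (half_mem hj')

lemma lift2_inj : Function.Injective (lift2 (n := n)) := by
  intro T T' h
  ext i
  rw [← mem_lift2_dd, h, mem_lift2_dd]

lemma interval_lift2 {T : Finset (Fin n)} (h : IsInterval1D T) :
    IsInterval1D (lift2 T) := by
  intro a b c ha hc hab hbc
  rcases eq_or_lt_of_le hbc with rfl | hlt
  · exact hc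
  -- half of a and c are in T
  have hha := half_mem ha
  have hhc := half_mem hc
  have hab' : (a : ℕ) ≤ (b : ℕ) := hab
  have hbc' : (b : ℕ) < (c : ℕ) := hlt
  have hb2 : (b : ℕ) / 2 < n := by omega
  have hbmem : (⟨(b : ℕ) / 2, hb2⟩ : Fin n) ∈ T := by
    refine h _ ⟨(b : ℕ) / 2, hb2⟩ _ hha hhc ?_ ?_ <;>
      simp only [Fin.le_def, Fin.val_mk] <;> omega
  by_cases hpar : (b : ℕ) % 2 = 0
  · have : b = dd ⟨(b : ℕ) / 2, hb2⟩ := Fin.ext (by simp [dd]; omega)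
    rw [this, mem_lift2_dd]
    exact hbmem
  · -- b odd; also need the successor
    have hsucc : (b : ℕ) / 2 + 1 < n := by omega
    have hsmem : (⟨(b : ℕ) / 2 + 1, hsucc⟩ : Fin n) ∈ T := by
      refine h _ ⟨(b : ℕ) / 2 + 1, hsucc⟩ _ hha hhc ?_ ?_ <;>
        simp only [Fin.le_def, Fin.val_mk] <;> omega
    have : b = ds ⟨(b : ℕ) / 2, hb2⟩ := Fin.ext (by simp only [ds, Fin.val_mk]; omega)
    rw [this, mem_lift2_ds]
    exact ⟨hbmem, ⟨⟨(b : ℕ) / 2 + 1, hsucc⟩, hsmem, rfl⟩⟩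

lemma czfun_lift2 (𝒯 : Finset (Finset (Fin n))) (y : Fin (2 * n) → Bool)
    (h : ∀ i, y (ds i) = true) :
    czfun (𝒯.image lift2) y = czfun 𝒯 (fun i => y (dd i)) := by
  rw [czfun, czfun, Finset.prod_image (fun T _ T' _ hTT' => lift2_inj hTT')]
  refine Finset.prod_congr rfl fun T _ => ?_
  congr 1
  simp only [eq_iff_iff]
  constructor
  · intro hall i hi
    exact hall (dd i) (mem_lift2_dd.mpr hi)
  · intro hall j hj
    rcases mem_lift2_elim hj with ⟨i, hi, rfl⟩ | ⟨i, _, rfl⟩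
    · exact hall i hi
    · exact h i

lemma lifted_cz_mulVec (𝒯 : Finset (Finset (Fin n))) (v : (Fin n → Bool) → ℂ) :
    (czmat (𝒯.image lift2)).mulVec (Pv v) = Pv ((czmat 𝒯).mulVec v) := by
  funext y
  rw [czmat_mulVec, czmat_mulVec]
  show czfun (𝒯.image lift2) y * Pv v y = Pv (fun x => czfun 𝒯 x * v x) y
  by_cases h : ∀ i, y (ds i) = true
  · rw [Pv, Pv, if_pos h, if_pos h, czfun_lift2 𝒯 y h]
  · rw [Pv, Pv, if_neg h, if_neg h, mul_zero]

/-- Structural lifting of a 1D-QAC circuit to the doubled line. -/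
lemma lift_qac (d : ℕ) (C : Matrix (Fin n → Bool) (Fin n → Bool) ℂ)
    (hC : IsQACOn IsInterval1D d C) :
    ∃ D : Matrix (Fin (2 * n) → Bool) (Fin (2 * n) → Bool) ℂ,
      IsQACOn IsInterval1D d D ∧ ∀ v, D.mulVec (Pv v) = Pv (C.mulVec v) := by
  induction d generalizing C with
  | zero =>
      obtain ⟨u, hu, rfl⟩ := hC.eq_layer
      refine ⟨layer (pgate u (fun _ => 1)), ?_, fun v => lifted_layer_mulVec u v⟩
      exact isSingleQubitLayer_layer (pgate_mem hu (fun _ => one_mem _))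
  | succ d ih =>
      obtain ⟨L, M, C', hL, hM, hC', rfl⟩ := hC
      obtain ⟨D', hD', hD'v⟩ := ih C' hC'
      obtain ⟨u, hu, rfl⟩ := hL.eq_layer
      obtain ⟨𝒯, hP, hdisj, hMeq⟩ := hM
      have hM' : M = czmat 𝒯 := by ext x y; exact hMeq x y
      subst hM'
      refine ⟨layer (pgate u (fun _ => 1)) * czmat (𝒯.image lift2) * D', ?_, ?_⟩
      · refine ⟨_, _, D', isSingleQubitLayer_layer (pgate_mem hu (fun _ => one_mem _)),
          isCZLayer_czmat ?_ ?_, hD', rfl⟩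
        · intro T₂ hT₂
          obtain ⟨T, hT, rfl⟩ := Finset.mem_image.mp hT₂
          exact interval_lift2 (hP T hT)
        · intro x hx y hy hxy
          simp only [Finset.coe_image, Set.mem_image, Finset.mem_coe] at hx hy
          obtain ⟨T, hT, rfl⟩ := hx
          obtain ⟨T', hT', rfl⟩ := hy
          exact disjoint_lift2 (hdisj hT hT' (fun h => hxy (by rw [h])))
      · intro v
        rw [← Matrix.mulVec_mulVec, ← Matrix.mulVec_mulVec, hD'v v,
          lifted_cz_mulVec, lifted_layer_mulVec,
          Matrix.mulVec_mulVec, Matrix.mulVec_mulVec]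

end LiftCZ
noncomputable section FinalStep

open Finset

variable {n : ℕ}

/-- Initial state `|0⋯0⟩`. -/
def e0v {ι : Type*} [Fintype ι] [DecidableEq ι] : (ι → Bool) → ℂ :=
  fun z => if z = (fun _ => false) then 1 else 0

/-- Cat state `(|0⋯0⟩+|1⋯1⟩)/√2`. -/
def catv {ι : Type*} [Fintype ι] [DecidableEq ι] : (ι → Bool) → ℂ :=
  fun z => if z = (fun _ => false) then sc else if z = (fun _ => true) then sc else 0

/-- The CZ layer coupling each even qubit with the odd qubit to its right. -/
def pairsCZ (n : ℕ) : Finset (Finset (Fin (2 * n))) :=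
  Finset.univ.image (fun i : Fin n => ({dd i, ds i} : Finset (Fin (2 * n))))

/-- All-`v` on the evens, all-one on the odds. -/
def Jv (v : Bool) : Fin (2 * n) → Bool := pe (fun _ => (v, true))

lemma Jv_dd (v : Bool) (i : Fin n) : Jv v (dd i) = v := pe_dd _ i
lemma Jv_ds (v : Bool) (i : Fin n) : Jv v (ds i) = true := pe_ds _ i

lemma pair_inj : Function.Injective (fun i : Fin n => ({dd i, ds i} : Finset (Fin (2 * n)))) := by
  intro i i' h
  simp only at h
  have : dd i ∈ ({dd i', ds i'} : Finset (Fin (2 * n))) := by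
    rw [← h]; simp
  rcases Finset.mem_insert.mp this with h' | h'
  · exact dd_inj h'
  · exact absurd (Finset.mem_singleton.mp h') (dd_ne_ds i i')

lemma pairs_interval : ∀ T ∈ pairsCZ n, IsInterval1D T := by
  intro T hT
  obtain ⟨i, _, rfl⟩ := Finset.mem_image.mp hT
  intro a b c ha hc hab hbc
  simp only [Finset.mem_insert, Finset.mem_singleton] at ha hc ⊢
  have hav : (a : ℕ) = 2 * i.val ∨ (a : ℕ) = 2 * i.val + 1 := by
    rcases ha with rfl | rfl
    · exact Or.inl rfl
    · exact Or.inr rfl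
  have hcv : (c : ℕ) = 2 * i.val ∨ (c : ℕ) = 2 * i.val + 1 := by
    rcases hc with rfl | rfl
    · exact Or.inl rfl
    · exact Or.inr rfl
  have hab' : (a : ℕ) ≤ b := hab
  have hbc' : (b : ℕ) ≤ c := hbc
  have : (b : ℕ) = 2 * i.val ∨ (b : ℕ) = 2 * i.val + 1 := by omega
  rcases this with h | h
  · exact Or.inl (Fin.ext h)
  · exact Or.inr (Fin.ext h)

lemma pairs_disjoint :
    ((pairsCZ n : Set (Finset (Fin (2 * n)))).Pairwise fun T T' => Disjoint T T') := by
  intro x hx y hy hxy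
  simp only [pairsCZ, Finset.coe_image, Set.mem_image, Finset.mem_coe] at hx hy
  obtain ⟨i, _, rfl⟩ := hx
  obtain ⟨i', _, rfl⟩ := hy
  have hii : i ≠ i' := fun h => hxy (by rw [h])
  rw [Finset.disjoint_left]
  intro j hj hj'
  simp only [Finset.mem_insert, Finset.mem_singleton] at hj hj'
  have hne : i.val ≠ i'.val := fun h => hii (Fin.ext h)
  rcases hj with rfl | rfl <;> rcases hj' with h | h <;>
    · have := congrArg Fin.val h
      simp only [dd, ds] at this
      omega

lemma czfun_pairs (y : Fin (2 * n) → Bool) :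
    czfun (pairsCZ n) y =
      ∏ i, (if y (dd i) = true ∧ y (ds i) = true then (-1 : ℂ) else 1) := by
  rw [czfun, pairsCZ, Finset.prod_image (fun i _ i' _ h => pair_inj h)]
  refine Finset.prod_congr rfl fun i _ => ?_
  congr 1
  simp only [eq_iff_iff, Finset.mem_insert, Finset.mem_singleton]
  constructor
  · intro h
    exact ⟨h _ (Or.inl rfl), h _ (Or.inr rfl)⟩
  · rintro ⟨h1, h2⟩ j (rfl | rfl)
    · exact h1
    · exact h2

lemma pairsum (ze zo v : Bool) :
    (∑ p : Bool × Bool,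
      ((1 : Matrix Bool Bool ℂ) ze p.1 * Hm zo p.2) *
        ((if p.1 = true ∧ p.2 = true then (-1 : ℂ) else 1) *
          ((1 : Matrix Bool Bool ℂ) p.1 v * (Hm * Xm) p.2 true))) =
    if ze = v ∧ zo = v then 1 else 0 := by
  have hsq : sc * sc = 1 / 2 := sc_mul_sc
  have hHX : ∀ b : Bool, (Hm * Xm) b true = sc := by
    intro b
    cases b <;> simp [Matrix.mul_apply, Fintype.sum_bool, Hm, Xm]
  simp only [Fintype.sum_prod_type, Fintype.sum_bool, hHX, Matrix.one_apply, Hm]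
  cases ze <;> cases zo <;> cases v <;> simp <;> ring_nf <;>
    rw [show sc ^ 2 = 1 / 2 by rw [sq, hsq]] <;> norm_num

end FinalStep
noncomputable section FinalStep2

open Finset

variable {n : ℕ}

lemma final_step (v : Bool) :
    (layer (pgate (fun _ => 1) (fun _ => Hm))).mulVec
      ((czmat (pairsCZ n)).mulVec
        ((layer (pgate (fun _ => (1 : Matrix Bool Bool ℂ)) (fun _ => Hm * Xm))).mulVec
          (fun y => if y = Jv v then (1 : ℂ) else 0))) =
    fun z => if z = (fun _ => v) then (1 : ℂ) else 0 := by
  rw [layer_mulVec_basis, czmat_mulVec]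
  funext z
  simp only [layer_mulVec]
  have key : ∀ y : Fin (2 * n) → Bool,
      (∏ j, pgate (fun _ => 1) (fun _ => Hm) j (z j) (y j)) *
        (czfun (pairsCZ n) y *
          ∏ j, pgate (fun _ => (1 : Matrix Bool Bool ℂ)) (fun _ => Hm * Xm) j (y j) (Jv v j)) =
      ∏ i, (((1 : Matrix Bool Bool ℂ) (z (dd i)) (y (dd i)) * Hm (z (ds i)) (y (ds i))) *
        ((if y (dd i) = true ∧ y (ds i) = true then (-1 : ℂ) else 1) *
          ((1 : Matrix Bool Bool ℂ) (y (dd i)) v * (Hm * Xm) (y (ds i)) true))) := by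
    intro y
    rw [prod_split (fun j => pgate (fun _ => 1) (fun _ => Hm) j (z j) (y j)),
      prod_split (fun j => pgate (fun _ => (1 : Matrix Bool Bool ℂ)) (fun _ => Hm * Xm) j (y j) (Jv v j)),
      czfun_pairs]
    simp only [pgate_dd, pgate_ds, Jv_dd, Jv_ds]
    rw [← Finset.prod_mul_distrib, ← Finset.prod_mul_distrib]
  simp only [key]
  rw [sum_split (fun y => ∏ i, (((1 : Matrix Bool Bool ℂ) (z (dd i)) (y (dd i)) * Hm (z (ds i)) (y (ds i))) *
        ((if y (dd i) = true ∧ y (ds i) = true then (-1 : ℂ) else 1) *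
          ((1 : Matrix Bool Bool ℂ) (y (dd i)) v * (Hm * Xm) (y (ds i)) true))))]
  have key2 : ∀ g : Fin n → Bool × Bool,
      (∏ i, (((1 : Matrix Bool Bool ℂ) (z (dd i)) (pe g (dd i)) * Hm (z (ds i)) (pe g (ds i))) *
        ((if pe g (dd i) = true ∧ pe g (ds i) = true then (-1 : ℂ) else 1) *
          ((1 : Matrix Bool Bool ℂ) (pe g (dd i)) v * (Hm * Xm) (pe g (ds i)) true)))) =
      ∏ i, (((1 : Matrix Bool Bool ℂ) (z (dd i)) (g i).1 * Hm (z (ds i)) (g i).2) *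
        ((if (g i).1 = true ∧ (g i).2 = true then (-1 : ℂ) else 1) *
          ((1 : Matrix Bool Bool ℂ) (g i).1 v * (Hm * Xm) (g i).2 true))) := by
    intro g
    refine Finset.prod_congr rfl fun i _ => ?_
    rw [pe_dd, pe_ds]
  simp only [key2]
  rw [sum_prod_split (fun i p => ((1 : Matrix Bool Bool ℂ) (z (dd i)) p.1 * Hm (z (ds i)) p.2) *
        ((if p.1 = true ∧ p.2 = true then (-1 : ℂ) else 1) *
          ((1 : Matrix Bool Bool ℂ) p.1 v * (Hm * Xm) p.2 true)))]
  simp only [pairsum]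
  rw [prod_ite_one_zero (p := fun i => z (dd i) = v ∧ z (ds i) = v)]
  congr 1
  simp only [eq_iff_iff]
  exact ⟨fun h => ((eq_forall_dd_ds z v).mpr h).symm ▸ rfl, fun h => (eq_forall_dd_ds z v).mp h⟩

lemma Lx_e0 :
    (layer (pgate (fun _ => (1 : Matrix Bool Bool ℂ)) (fun _ => Xm))).mulVec
      (e0v (ι := Fin (2 * n))) = Pv (e0v (ι := Fin n)) := by
  rw [show (e0v (ι := Fin (2 * n))) = fun x => if x = (fun _ => false) then (1:ℂ) else 0 from rfl,
    layer_mulVec_basis]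
  funext z
  rw [prod_split (fun j => pgate (fun _ => (1 : Matrix Bool Bool ℂ)) (fun _ => Xm) j (z j) false)]
  simp only [pgate_dd, pgate_ds]
  have hfac : ∀ i : Fin n,
      (1 : Matrix Bool Bool ℂ) (z (dd i)) false * Xm (z (ds i)) false =
      if z (dd i) = false ∧ z (ds i) = true then 1 else 0 := by
    intro i
    cases h1 : z (dd i) <;> cases h2 : z (ds i) <;> simp [Xm, Matrix.one_apply]
  simp only [hfac]
  rw [prod_ite_one_zero (p := fun i => z (dd i) = false ∧ z (ds i) = true)]
  rw [Pv, e0v]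
  by_cases h : ∀ i, z (dd i) = false ∧ z (ds i) = true
  · rw [if_pos h, if_pos (fun i => (h i).2), if_pos (funext fun i => (h i).1)]
  · rw [if_neg h]
    by_cases h1 : ∀ i, z (ds i) = true
    · rw [if_pos h1, if_neg ?_]
      intro hc
      exact h (fun i => ⟨congrFun hc i, h1 i⟩)
    · rw [if_neg h1]

lemma eq_Jv_iff (y : Fin (2 * n) → Bool) (v : Bool) :
    y = Jv v ↔ ∀ i, y (dd i) = v ∧ y (ds i) = true := by
  rw [Jv, ← Equiv.symm_apply_eq]
  show (fun i => (y (dd i), y (ds i))) = (fun _ => (v, true)) ↔ _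
  rw [funext_iff]
  simp [Prod.ext_iff]

lemma Pv_cat (hn : 0 < n) :
    Pv (catv (ι := Fin n)) =
      sc • (fun y => if y = Jv (n := n) false then (1 : ℂ) else 0) +
        sc • (fun y => if y = Jv (n := n) true then (1 : ℂ) else 0) := by
  funext y
  simp only [Pv, catv, Pi.add_apply, Pi.smul_apply, smul_eq_mul]
  by_cases h1 : ∀ i, y (ds i) = true
  · rw [if_pos h1]
    by_cases h2 : (fun i => y (dd i)) = (fun _ => false)
    · rw [if_pos h2, if_pos ((eq_Jv_iff y false).mpr fun i => ⟨congrFun h2 i, h1 i⟩),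
        if_neg ?_]
      · ring
      · intro hc
        have := ((eq_Jv_iff y true).mp hc ⟨0, hn⟩).1
        rw [congrFun h2 ⟨0, hn⟩] at this
        exact Bool.false_ne_true this
    · rw [if_neg h2]
      by_cases h3 : (fun i => y (dd i)) = (fun _ => true)
      · rw [if_pos h3, if_neg ?_, if_pos ((eq_Jv_iff y true).mpr fun i => ⟨congrFun h3 i, h1 i⟩)]
        · ring
        · intro hc
          exact h2 (funext fun i => ((eq_Jv_iff y false).mp hc i).1)
      · rw [if_neg h3, if_neg ?_, if_neg ?_]
        · ring
        · intro hc
          exact h3 (funext fun i => ((eq_Jv_iff y true).mp hc i).1)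
        · intro hc
          exact h2 (funext fun i => ((eq_Jv_iff y false).mp hc i).1)
  · rw [if_neg h1, if_neg ?_, if_neg ?_]
    · ring
    · intro hc
      exact h1 fun i => ((eq_Jv_iff y true).mp hc i).2
    · intro hc
      exact h1 fun i => ((eq_Jv_iff y false).mp hc i).2

lemma cat_combine (hn : 0 < n) :
    (sc • (fun z => if z = (fun _ => false) then (1 : ℂ) else 0) +
      sc • (fun z => if z = (fun _ => true) then (1 : ℂ) else 0)) =
    (catv (ι := Fin (2 * n))) := by
  funext z
  simp only [Pi.add_apply, Pi.smul_apply, smul_eq_mul, catv]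
  have hne : ((fun _ => false) : Fin (2 * n) → Bool) ≠ (fun _ => true) := by
    intro h
    exact Bool.false_ne_true (congrFun h ⟨0, by omega⟩)
  by_cases h0 : z = (fun _ => false)
  · rw [if_pos h0, if_pos h0, if_neg (h0 ▸ hne), mul_one, mul_zero, add_zero]
  · rw [if_neg h0, if_neg h0, mul_zero, zero_add]
    by_cases h1 : z = (fun _ => true)
    · rw [if_pos h1, if_pos h1, mul_one]
    · rw [if_neg h1, if_neg h1, mul_zero]

lemma double (hn : 0 < n) (k : ℕ)
    (h : ∃ C : Matrix (Fin n → Bool) (Fin n → Bool) ℂ,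
      Is1DQAC k C ∧ C.mulVec e0v = catv) :
    ∃ C₂ : Matrix (Fin (2 * n) → Bool) (Fin (2 * n) → Bool) ℂ,
      Is1DQAC (k + 1) C₂ ∧ C₂.mulVec e0v = catv := by
  obtain ⟨C, hC, hCv⟩ := h
  obtain ⟨D, hD, hDv⟩ := lift_qac k C hC
  have hSQL_A : IsSingleQubitLayer
      (layer (pgate (fun _ : Fin n => (1 : Matrix Bool Bool ℂ)) (fun _ => Hm * Xm))) :=
    isSingleQubitLayer_layer (pgate_mem (fun _ => one_mem _) (fun _ => mul_mem Hm_mem Xm_mem))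
  have hSQL_F : IsSingleQubitLayer
      (layer (pgate (fun _ : Fin n => (1 : Matrix Bool Bool ℂ)) (fun _ => Hm))) :=
    isSingleQubitLayer_layer (pgate_mem (fun _ => one_mem _) (fun _ => Hm_mem))
  have hSQL_X : IsSingleQubitLayer
      (layer (pgate (fun _ : Fin n => (1 : Matrix Bool Bool ℂ)) (fun _ => Xm))) :=
    isSingleQubitLayer_layer (pgate_mem (fun _ => one_mem _) (fun _ => Xm_mem))
  refine ⟨layer (pgate (fun _ => 1) (fun _ => Hm)) * czmat (pairsCZ n) *
    (layer (pgate (fun _ => 1) (fun _ => Hm * Xm)) *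
      (D * layer (pgate (fun _ => 1) (fun _ => Xm)))), ?_, ?_⟩
  · exact ⟨_, _, _, hSQL_F, isCZLayer_czmat pairs_interval pairs_disjoint,
      (hD.mul_layer hSQL_X).layer_mul hSQL_A, rfl⟩
  · rw [← Matrix.mulVec_mulVec, ← Matrix.mulVec_mulVec, ← Matrix.mulVec_mulVec,
      ← Matrix.mulVec_mulVec, Lx_e0, hDv, hCv, Pv_cat hn]
    simp only [Matrix.mulVec_add, Matrix.mulVec_smul]
    rw [final_step false, final_step true]
    exact cat_combine hn

end FinalStep2

lemma cat_base :
    ∃ C : Matrix (Fin 1 → Bool) (Fin 1 → Bool) ℂ,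
      Is1DQAC 0 C ∧ C.mulVec e0v = catv := by
  refine ⟨layer (fun _ => Hm), isSingleQubitLayer_layer (fun _ => Hm_mem), ?_⟩
  rw [show (e0v : (Fin 1 → Bool) → ℂ) = fun x => if x = (fun _ => false) then (1:ℂ) else 0 from rfl,
    layer_mulVec_basis]
  funext z
  rw [Fin.prod_univ_one]
  have hz : z = fun _ => z 0 := funext fun i => by rw [Subsingleton.elim i 0]
  rw [catv]
  cases h : z 0
  · rw [if_pos (funext fun i => by rw [Subsingleton.elim i 0, h])]
    simp [Hm]
  · rw [if_neg ?_, if_pos (funext fun i => by rw [Subsingleton.elim i 0, h])]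
    · simp [Hm]
    · intro hc
      rw [congrFun hc 0] at h
      exact Bool.false_ne_true h

lemma cat_all (k : ℕ) :
    ∃ C : Matrix (Fin (2 ^ k) → Bool) (Fin (2 ^ k) → Bool) ℂ,
      Is1DQAC k C ∧ C.mulVec e0v = catv := by
  induction k with
  | zero =>
      rw [show (2 : ℕ) ^ 0 = 1 from pow_zero 2]
      exact cat_base
  | succ k ih =>
      rw [show (2 : ℕ) ^ (k + 1) = 2 * 2 ^ k from by rw [pow_succ]; ring]
      exact double (pow_pos (by norm_num : (0:ℕ) < 2) k) k ih
/-- **Cat-state synthesis by a logarithmic-depth 1D-QAC circuit.**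
For every `k ≥ 1` and `n = 2^k`, there is a depth-`k` 1D-QAC circuit on exactly
`n` qubits (no ancillas) mapping `|0^n⟩` to `(|0^n⟩ + |1^n⟩)/√2`. -/
theorem stmt3 (k : ℕ) (hk : 1 ≤ k) :
    ∃ C : Matrix (Fin (2 ^ k) → Bool) (Fin (2 ^ k) → Bool) ℂ,
      Is1DQAC k C ∧
      C.mulVec (fun z => if z = (fun _ => false) then 1 else 0) =
        fun z =>
          if z = (fun _ => false) then (1 : ℂ) / (Real.sqrt 2 : ℂ)
          else if z = (fun _ => true) then (1 : ℂ) / (Real.sqrt 2 : ℂ)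
          else 0 := by
  obtain ⟨C, h1, h2⟩ := cat_all k
  exact ⟨C, h1, h2⟩
end

section
/- Let A, B, C be nonempty finite types. Let G be a unitary matrix on ℂ^{A×B}, let H be a unitary matrix on ℂ^{B×C}, and let φ ∈ ℂ^{B×C} be a unit vector. Define the unitary U = (G ⊗ I_C)·(I_A ⊗ H) on ℂ^{A×B×C}, and for each x ∈ A let ψ_x = U(e_x ⊗ φ), where e_x is the standard basis vector of ℂ^A indexed by x, and let ρ^x be the partial trace over C of ψ_x ψ_x†, i.e., the matrix on ℂ^{A×B} with entries ρ^x((a,b),(a',b')) = Σ_{c∈C} ψ_x(a,b,c)·conj(ψ_x(a',b',c)). Then Σ_{x∈A} ρ^x ⪯ I, i.e., the matrix I_{A×B} − Σ_{x∈A} ρ^x is positive semidefinite. -/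
open scoped ComplexOrder

/-- Rotate a triple sum. -/
lemma aux_sum_rot {ι κ γ : Type*} [Fintype ι] [Fintype κ] [Fintype γ] (f : ι → κ → γ → ℂ) :
    (∑ a, ∑ b, ∑ c, f a b c) = ∑ c, ∑ a, ∑ b, f a b c := by
  rw [show (∑ a, ∑ b, ∑ c, f a b c) = ∑ a, ∑ c, ∑ b, f a b c from
    Finset.sum_congr rfl fun _ _ => Finset.sum_comm]
  exact Finset.sum_comm

/-- Sum of `f i * star (f i)` is the coercion of the sum of squared norms. -/
lemma aux_sum_mul_star {ι : Type*} [Fintype ι] (f : ι → ℂ) :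
    ∑ i, f i * star (f i) = ((∑ i, ‖f i‖ ^ 2 : ℝ) : ℂ) := by
  rw [Complex.ofReal_sum]
  refine Finset.sum_congr rfl fun i _ => ?_
  rw [← Complex.normSq_eq_norm_sq]
  exact Complex.mul_conj (f i)

/-- Unitary matrices preserve the ℓ² norm (as a sum of squared norms). -/
lemma aux_unitary_norm {n : Type*} [Fintype n] [DecidableEq n]
    (M : Matrix n n ℂ) (hM : M ∈ Matrix.unitaryGroup n ℂ) (w : n → ℂ) :
    ∑ i, ‖M.mulVec w i‖ ^ 2 = ∑ i, ‖w i‖ ^ 2 := by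
  have key : dotProduct (star (M.mulVec w)) (M.mulVec w)
      = dotProduct (star w) w := by
    rw [Matrix.star_mulVec, Matrix.dotProduct_mulVec, Matrix.vecMul_vecMul]
    have h1 : M.conjTranspose * M = 1 := hM.1
    rw [h1, Matrix.vecMul_one]
  have coe : ∀ u : n → ℂ, dotProduct (star u) u = ((∑ i, ‖u i‖ ^ 2 : ℝ) : ℂ) := by
    intro u
    rw [← aux_sum_mul_star u]
    exact Finset.sum_congr rfl fun i _ => mul_comm _ _
  rw [coe, coe] at key
  exact_mod_cast key

/-- Quadratic form of a partial-trace-style Gram matrix. -/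
lemma aux_quadform {R C : Type*} [Fintype R] [Fintype C] (v : R → ℂ) (f : R → C → ℂ) :
    dotProduct (star v)
      ((Matrix.of fun r s => ∑ c, f r c * star (f s c)).mulVec v)
    = ∑ c, (∑ r, star (v r) * f r c) * star (∑ s, star (v s) * f s c) := by
  simp only [dotProduct, Matrix.mulVec, Matrix.of_apply, Pi.star_apply,
    Finset.sum_mul, Finset.mul_sum, star_sum, star_mul', star_star]
  rw [aux_sum_rot fun r s c => star (v r) * (f r c * star (f s c) * v s)]
  refine Finset.sum_congr rfl fun c _ => ?_
  conv_rhs => rw [Finset.sum_comm]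
  exact Finset.sum_congr rfl fun a _ => Finset.sum_congr rfl fun b _ => by ring

/-- **Reduced outputs of a separable circuit sum to at most the identity.**
Let `G` be a unitary on `ℂ^{A×B}`, `H` a unitary on `ℂ^{B×C}`, `φ` a unit vector
in `ℂ^{B×C}`, `U = (G ⊗ I_C)(I_A ⊗ H)`, and for each `x ∈ A` let
`ψ_x = U(e_x ⊗ φ)` and `ρ^x = Tr_C |ψ_x⟩⟨ψ_x|`.  Then `Σ_x ρ^x ⪯ I`. -/
theorem stmt5 {A B C : Type*} [Fintype A] [Fintype B] [Fintype C]
    [DecidableEq A] [DecidableEq B] [DecidableEq C]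
    [Nonempty A] [Nonempty B] [Nonempty C]
    (G : Matrix (A × B) (A × B) ℂ) (hG : G ∈ Matrix.unitaryGroup (A × B) ℂ)
    (H : Matrix (B × C) (B × C) ℂ) (hH : H ∈ Matrix.unitaryGroup (B × C) ℂ)
    (φ : B × C → ℂ) (hφ : ∑ bc, ‖φ bc‖ ^ 2 = 1) :
    let U : Matrix (A × B × C) (A × B × C) ℂ :=
      (Matrix.of fun p q =>
          G (p.1, p.2.1) (q.1, q.2.1) * (if p.2.2 = q.2.2 then 1 else 0)) *
      (Matrix.of fun p q => (if p.1 = q.1 then 1 else 0) * H p.2 q.2)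
    let ψ : A → (A × B × C → ℂ) := fun x =>
      U.mulVec fun p => if p.1 = x then φ p.2 else 0
    let ρ : A → Matrix (A × B) (A × B) ℂ := fun x =>
      Matrix.of fun r s => ∑ c, ψ x (r.1, r.2, c) * star (ψ x (s.1, s.2, c))
    ((1 : Matrix (A × B) (A × B) ℂ) - ∑ x, ρ x).PosSemidef := by
  intro U ψ ρ
  classical
  set χ : B × C → ℂ := H.mulVec φ with hχdef
  have hχnorm : ∑ bc, ‖χ bc‖ ^ 2 = 1 := by
    rw [hχdef, aux_unitary_norm H hH φ]; exact hφ
  -- explicit formula for ψ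
  have hψ : ∀ x p, ψ x p = ∑ b', G (p.1, p.2.1) (x, b') * χ (b', p.2.2) := by
    intro x p
    show (U.mulVec _) p = _
    simp only [U, Matrix.mulVec, dotProduct, Matrix.mul_apply, Matrix.of_apply,
      Finset.sum_mul, ite_mul, one_mul, zero_mul, mul_ite, mul_one, mul_zero]
    simp only [Fintype.sum_prod_type, Finset.sum_ite_irrel, Finset.sum_const_zero,
      Finset.sum_ite_eq, Finset.sum_ite_eq', Finset.mem_univ, if_true]
    have swap3 : ∀ (f : B → C → B → ℂ), (∑ a, ∑ b, ∑ c, f a b c) = ∑ c, ∑ a, ∑ b, f a b c :=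
      fun f => aux_sum_rot f
    rw [swap3 fun x1 y x2 => G (p.1, p.2.1) (x, x2) * H (x2, p.2.2) (x1, y) * φ (x1, y)]
    simp only [hχdef, Matrix.mulVec, dotProduct, Fintype.sum_prod_type, Finset.mul_sum]
    simp only [mul_assoc]
  refine Matrix.PosSemidef.of_dotProduct_mulVec_nonneg ?_ ?_
  · -- Hermitian
    refine Matrix.IsHermitian.sub Matrix.isHermitian_one ?_
    have : ∀ x : A, (ρ x).IsHermitian := by
      intro x
      ext r s
      simp only [ρ, Matrix.conjTranspose_apply, Matrix.of_apply, star_sum, star_mul', star_star]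
      exact Finset.sum_congr rfl fun c _ => mul_comm _ _
    show (∑ x, ρ x).conjTranspose = ∑ x, ρ x
    rw [Matrix.conjTranspose_sum]
    exact Finset.sum_congr rfl fun x _ => this x
  · intro v
    set z : A × B → ℂ := G.conjTranspose.mulVec v with hzdef
    set t : A → C → ℂ := fun x c => ∑ b, star (z (x, b)) * χ (b, c) with htdef
    -- quadratic form of ρ x
    have hts : ∀ x c, (∑ r, star (v r) * ψ x (r.1, r.2, c)) = t x c := by
      intro x c
      simp only [htdef, hzdef, hψ, Matrix.mulVec, dotProduct,
        Matrix.conjTranspose_apply, star_sum, star_mul', star_star]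
      simp only [Finset.mul_sum, Finset.sum_mul]
      rw [Finset.sum_comm]
      refine Finset.sum_congr rfl fun b _ => Finset.sum_congr rfl fun r _ => ?_
      rw [Prod.mk.eta]
      ring
    have hform : ∀ x, dotProduct (star v) ((ρ x).mulVec v)
        = ((∑ c, ‖t x c‖ ^ 2 : ℝ) : ℂ) := by
      intro x
      have := aux_quadform v (fun r c => ψ x (r.1, r.2, c))
      rw [show (ρ x) = Matrix.of fun r s =>
          ∑ c, ψ x (r.1, r.2, c) * star (ψ x (s.1, s.2, c)) from rfl] at *
      rw [this]
      rw [← aux_sum_mul_star (t x)]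
      exact Finset.sum_congr rfl fun c _ => by rw [hts x c]
    have hone : dotProduct (star v) ((1 : Matrix (A × B) (A × B) ℂ).mulVec v)
        = ((∑ r, ‖v r‖ ^ 2 : ℝ) : ℂ) := by
      rw [Matrix.one_mulVec, ← aux_sum_mul_star v]
      exact Finset.sum_congr rfl fun i _ => mul_comm _ _
    have hznorm : ∑ p, ‖z p‖ ^ 2 = ∑ r, ‖v r‖ ^ 2 := by
      rw [hzdef]
      exact aux_unitary_norm _ (Unitary.star_mem hG) v
    -- main inequality
    have hineq : ∑ x, ∑ c, ‖t x c‖ ^ 2 ≤ ∑ r, ‖v r‖ ^ 2 := by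
      rw [← hznorm, show ∑ p : A × B, ‖z p‖ ^ 2 = ∑ x, ∑ b, ‖z (x, b)‖ ^ 2 from
        Fintype.sum_prod_type _]
      refine Finset.sum_le_sum fun x _ => ?_
      have hCS : ∀ c, ‖t x c‖ ^ 2 ≤ (∑ b, ‖z (x, b)‖ ^ 2) * (∑ b, ‖χ (b, c)‖ ^ 2) := by
        intro c
        have h1 : ‖t x c‖ ≤ ∑ b, ‖z (x, b)‖ * ‖χ (b, c)‖ := by
          refine (norm_sum_le _ _).trans_eq ?_
          exact Finset.sum_congr rfl fun b _ => by rw [norm_mul, norm_star]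
        calc ‖t x c‖ ^ 2 ≤ (∑ b, ‖z (x, b)‖ * ‖χ (b, c)‖) ^ 2 :=
              pow_le_pow_left₀ (norm_nonneg _) h1 2
          _ ≤ (∑ b, ‖z (x, b)‖ ^ 2) * (∑ b, ‖χ (b, c)‖ ^ 2) :=
              Finset.sum_mul_sq_le_sq_mul_sq _ _ _
      calc ∑ c, ‖t x c‖ ^ 2 ≤ ∑ c, (∑ b, ‖z (x, b)‖ ^ 2) * (∑ b, ‖χ (b, c)‖ ^ 2) :=
            Finset.sum_le_sum fun c _ => hCS c
        _ = (∑ b, ‖z (x, b)‖ ^ 2) * ∑ c, ∑ b, ‖χ (b, c)‖ ^ 2 := by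
            rw [Finset.mul_sum]
        _ = ∑ b, ‖z (x, b)‖ ^ 2 := by
            rw [show ∑ c, ∑ b, ‖χ (b, c)‖ ^ 2 = ∑ bc : B × C, ‖χ bc‖ ^ 2 by
              rw [Fintype.sum_prod_type, Finset.sum_comm], hχnorm, mul_one]
    -- combine
    have hmv : (∑ x, ρ x).mulVec v = ∑ x, (ρ x).mulVec v := by
      ext i
      simp [Matrix.mulVec, dotProduct, Matrix.sum_apply, Finset.sum_mul]
      rw [Finset.sum_comm]
    have hfinal : dotProduct (star v)
        (((1 : Matrix (A × B) (A × B) ℂ) - ∑ x, ρ x).mulVec v)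
        = ((∑ r, ‖v r‖ ^ 2 - ∑ x, ∑ c, ‖t x c‖ ^ 2 : ℝ) : ℂ) := by
      have hds : dotProduct (star v) (∑ x, (ρ x).mulVec v)
          = ∑ x, dotProduct (star v) ((ρ x).mulVec v) := by
        simp only [dotProduct, Finset.sum_apply, Finset.mul_sum]
        exact Finset.sum_comm
      rw [Matrix.sub_mulVec, dotProduct_sub, hone, hmv, hds]
      simp only [hform]
      push_cast
      ring
    rw [hfinal]
    exact Complex.zero_le_real.2 (sub_nonneg.2 hineq)
end

section
/- Let s ≥ 3 be an integer. Let {S_i}_{i∈I} be a finite family, indexed by a finite set I, of pairwise disjoint nonempty integer intervals, and let {T_j}_{j∈J} be a finite family of pairwise disjoint integer intervals such that each T_j intersects at most s of the intervals S_i. For each i ∈ I define S'_i = S_i ∪ ⋃{T_j : T_j ∩ S_i ≠ ∅}. Then there exists a subset I' ⊆ I with |I'| ≥ |I|/s such that the sets S'_i for i ∈ I' are pairwise disjoint. -/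
open Finset

/-- **1D structure lemma (combinatorial form).**
Given pairwise disjoint nonempty integer intervals `S i` (`i ∈ I`) and pairwise
disjoint integer intervals `T j` (`j ∈ J`) such that each `T j` intersects at
most `s ≥ 3` of the `S i`, letting
`S' i = S i ∪ ⋃ {T j : T j ∩ S i ≠ ∅}`, there is a subset `I' ⊆ I` with
`|I'| ≥ |I|/s` such that the `S' i`, `i ∈ I'`, are pairwise disjoint. -/
theorem stmt6 {I J : Type*} [Fintype I] [Fintype J]
    (s : ℕ) (hs : 3 ≤ s)
    (S : I → Set ℤ) (hSint : ∀ i, ∃ a b : ℤ, S i = Set.Icc a b)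
    (hSne : ∀ i, (S i).Nonempty)
    (hSdisj : Pairwise fun i i' => Disjoint (S i) (S i'))
    (T : J → Set ℤ) (hTint : ∀ j, ∃ a b : ℤ, T j = Set.Icc a b)
    (hTdisj : Pairwise fun j j' => Disjoint (T j) (T j'))
    (hTs : ∀ j, {i | (T j ∩ S i).Nonempty}.ncard ≤ s) :
    ∃ I' : Set I, (Fintype.card I : ℝ) / (s : ℝ) ≤ (I'.ncard : ℝ) ∧
      I'.Pairwise fun i i' =>
        Disjoint (S i ∪ ⋃ j ∈ {j | (T j ∩ S i).Nonempty}, T j)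
          (S i' ∪ ⋃ j ∈ {j | (T j ∩ S i').Nonempty}, T j) := by
  classical
  have hs0 : 0 < s := by omega
  -- choose a representative point in each S i
  choose f hfm using hSne
  have hfnot : ∀ {i k : I}, k ≠ i → f k ∉ S i := by
    intro i k hne
    exact Set.disjoint_left.mp (hSdisj hne) (hfm k)
  have hfinj : Function.Injective f := by
    intro i i' h
    by_contra hne
    exact hfnot hne (by rw [h]; exact hfm i')
  -- rank function
  set g : I → ℕ := fun i => (univ.filter fun k => f k < f i).card with hg
  have gmono : ∀ {i i' : I}, f i < f i' → g i < g i' := by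
    intro i i' h
    have hsub : (univ.filter fun k => f k < f i) ⊆ (univ.filter fun k => f k < f i') := by
      intro k hk
      simp only [mem_filter, mem_univ, true_and] at hk ⊢
      omega
    refine Finset.card_lt_card ⟨hsub, fun hc => ?_⟩
    have : i ∈ univ.filter fun k => f k < f i := hc (by simp [h])
    simp at this
  have ginj : Function.Injective g := by
    intro i i' h
    by_contra hne
    rcases lt_trichotomy (f i) (f i') with hlt | heq | hlt
    · exact absurd h (Nat.ne_of_lt (gmono hlt))
    · exact hne (hfinj heq)
    · exact absurd h.symm (Nat.ne_of_lt (gmono hlt))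
  have glt : ∀ i, g i < Fintype.card I := by
    intro i
    refine Finset.card_lt_card ⟨Finset.filter_subset _ _, fun hc => ?_⟩
    have : i ∈ univ.filter fun k => f k < f i := hc (mem_univ i)
    simp at this
  -- betweenness: if T j meets S i and S i', it meets every S k strictly between
  have hbetween : ∀ (i i' k : I) (j : J), (T j ∩ S i).Nonempty → (T j ∩ S i').Nonempty →
      f i < f k → f k < f i' → (T j ∩ S k).Nonempty := by
    intro i i' k j h1 h2 hik hki
    obtain ⟨x, hxT, hxS⟩ := h1
    obtain ⟨y, hyT, hyS⟩ := h2
    obtain ⟨a, b, hab⟩ := hSint i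
    obtain ⟨a', b', hab'⟩ := hSint i'
    obtain ⟨c, d, hcd⟩ := hTint j
    have hki' : k ≠ i := fun h => by subst h; omega
    have hki'' : k ≠ i' := fun h => by subst h; omega
    have h3 : f k ∉ S i := hfnot hki'
    have h4 : f k ∉ S i' := hfnot hki''
    have h5 := hfm i
    have h6 := hfm i'
    rw [hab] at hxS h3 h5
    rw [hab'] at hyS h4 h6
    rw [hcd] at hxT hyT ⊢
    simp only [Set.mem_Icc, not_and, not_le] at hxS h3 h5 hyS h4 h6 hxT hyT
    refine ⟨f k, ?_, hfm k⟩
    simp only [Set.mem_Icc]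
    omega
  -- counting: if T j meets both S i and S i' with f i < f i', ranks are close
  have hcount : ∀ (i i' : I) (j : J), (T j ∩ S i).Nonempty → (T j ∩ S i').Nonempty →
      f i < f i' → g i' < g i + s := by
    intro i i' j h1 h2 hlt
    by_contra hc
    push_neg at hc
    set F : Finset I := univ.filter fun k => f i ≤ f k ∧ f k < f i' with hF
    have hunion : (univ.filter fun k => f k < f i') =
        (univ.filter fun k => f k < f i) ∪ F := by
      rw [← Finset.filter_or]
      apply Finset.filter_congr
      intro k _
      constructor <;> intro h <;> omega
    have hdisj : Disjoint (univ.filter fun k => f k < f i) F := by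
      rw [Finset.disjoint_left]
      intro k hk hk'
      simp only [hF, mem_filter, mem_univ, true_and] at hk hk'
      omega
    have hcard : g i' = g i + F.card := by
      rw [hg]
      simp only
      rw [hunion, Finset.card_union_of_disjoint hdisj]
    have hFs : s ≤ F.card := by omega
    have hins : i' ∉ F := by simp [hF]
    have hsub : insert i' F ⊆ {k | (T j ∩ S k).Nonempty}.toFinset := by
      intro k hk
      rw [Set.mem_toFinset]
      rcases Finset.mem_insert.mp hk with rfl | hkF
      · exact h2
      · simp only [hF, mem_filter, mem_univ, true_and] at hkF
        rcases eq_or_lt_of_le hkF.1 with heq | hlt'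
        · have hki : k = i := hfinj heq.symm
          subst hki; exact h1
        · exact hbetween i i' k j h1 h2 hlt' hkF.2
    have hle : s + 1 ≤ {k | (T j ∩ S k).Nonempty}.toFinset.card := by
      calc s + 1 ≤ F.card + 1 := by omega
        _ = (insert i' F).card := (Finset.card_insert_of_notMem hins).symm
        _ ≤ _ := Finset.card_le_card hsub
    have := hTs j
    rw [Set.ncard_eq_toFinset_card'] at this
    omega
  -- the chosen subset
  refine ⟨{i | s ∣ g i}, ?_, ?_⟩
  · -- size bound
    rw [Set.ncard_eq_toFinset_card', Set.toFinset_setOf]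
    set n := Fintype.card I with hn
    -- image of g is range n
    have himg : univ.image g = Finset.range n := by
      apply Finset.eq_of_subset_of_card_le
      · intro m hm
        obtain ⟨i, _, rfl⟩ := Finset.mem_image.mp hm
        exact Finset.mem_range.mpr (glt i)
      · rw [Finset.card_range, Finset.card_image_of_injective _ ginj, hn]
        simp
    have hfilt : (univ.filter fun i => s ∣ g i).card
        = ((Finset.range n).filter fun m => s ∣ m).card := by
      rw [← himg, Finset.filter_image, Finset.card_image_of_injective _ ginj]
    -- n ≤ s * card of multiples of s below n
    have hmul : n ≤ s * ((Finset.range n).filter fun m => s ∣ m).card := by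
      have hmaps : ∀ m ∈ Finset.range n,
          s * (m / s) ∈ (Finset.range n).filter fun m => s ∣ m := by
        intro m hm
        rw [Finset.mem_filter, Finset.mem_range]
        refine ⟨lt_of_le_of_lt ?_ (Finset.mem_range.mp hm), ⟨m / s, rfl⟩⟩
        rw [Nat.mul_comm]
        exact Nat.div_mul_le_self m s
      have hfib : ∀ b ∈ (Finset.range n).filter fun m => s ∣ m,
          ((Finset.range n).filter fun m => s * (m / s) = b).card ≤ s := by
        intro b _
        have hsub : ((Finset.range n).filter fun m => s * (m / s) = b)
            ⊆ Finset.Ico b (b + s) := by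
          intro m hm
          rw [Finset.mem_filter] at hm
          have h1 := Nat.div_add_mod m s
          have h2 := Nat.mod_lt m hs0
          have h3 : b + m % s = m := by rw [← hm.2]; exact h1
          rw [Finset.mem_Ico]
          omega
        calc _ ≤ (Finset.Ico b (b + s)).card := Finset.card_le_card hsub
          _ = s := by rw [Nat.card_Ico]; omega
      calc n = (Finset.range n).card := (Finset.card_range n).symm
        _ ≤ s * ((Finset.range n).filter fun m => s ∣ m).card :=
          Finset.card_le_mul_card_image_of_maps_to hmaps s hfib
    rw [hfilt, div_le_iff₀ (by exact_mod_cast hs0)]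
    calc (n : ℝ) ≤ (s * ((Finset.range n).filter fun m => s ∣ m).card : ℕ) := by
          exact_mod_cast hmul
      _ = (((Finset.range n).filter fun m => s ∣ m).card : ℝ) * s := by push_cast; ring
  · -- pairwise disjointness
    intro i hi i' hi' hne
    rw [Set.disjoint_left]
    intro x hx hx'
    -- extract a common T j meeting both S i and S i'
    have hj : ∃ j : J, (T j ∩ S i).Nonempty ∧ (T j ∩ S i').Nonempty := by
      rcases hx with hxS | hxU
      · rcases hx' with hxS' | hxU'
        · exact absurd hxS' (Set.disjoint_left.mp (hSdisj hne) hxS)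
        · simp only [Set.mem_iUnion, Set.mem_setOf_eq, exists_prop] at hxU'
          obtain ⟨j, hj1, hj2⟩ := hxU'
          exact ⟨j, ⟨x, hj2, hxS⟩, hj1⟩
      · simp only [Set.mem_iUnion, Set.mem_setOf_eq, exists_prop] at hxU
        obtain ⟨j, hj1, hj2⟩ := hxU
        rcases hx' with hxS' | hxU'
        · exact ⟨j, hj1, ⟨x, hj2, hxS'⟩⟩
        · simp only [Set.mem_iUnion, Set.mem_setOf_eq, exists_prop] at hxU'
          obtain ⟨j', hj1', hj2'⟩ := hxU'
          have : j = j' := by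
            by_contra hjj
            exact Set.disjoint_left.mp (hTdisj hjj) hj2 hj2'
          subst this
          exact ⟨j, hj1, hj1'⟩
    obtain ⟨j, hj1, hj2⟩ := hj
    have key : ∀ (a b : I), s ∣ g a → s ∣ g b → f a < f b →
        (T j ∩ S a).Nonempty → (T j ∩ S b).Nonempty → False := by
      intro a b ha hb hab h1 h2
      have h3 := hcount a b j h1 h2 hab
      have h4 := gmono hab
      obtain ⟨p, hp⟩ := ha
      obtain ⟨q, hq⟩ := hb
      have hpq : p < q := by
        rw [hp, hq] at h4
        exact lt_of_mul_lt_mul_left h4 (Nat.zero_le s)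
      have : s * (p + 1) ≤ s * q := Nat.mul_le_mul_left s hpq
      rw [Nat.mul_add, Nat.mul_one] at this
      omega
    rcases lt_trichotomy (f i) (f i') with hlt | heq | hlt
    · exact key i i' hi hi' hlt hj1 hj2
    · exact hne (hfinj heq)
    · exact key i' i hi' hi hlt hj2 hj1
end

section
/- Let k ≥ 1 and let x_1 < x_2 < ⋯ < x_k be integers. For each i ∈ {1,…,k}, let S_i and T_i be integer intervals with x_i ∈ S_i and x_i ∈ T_i, and suppose that for all i, j ∈ {1,…,k}: x_j ∈ T_i if and only if x_i ∈ S_j. Suppose the intervals S_1, …, S_k are pairwise disjoint. Then the intervals T_i with i odd are pairwise disjoint. -/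
/-- **Alternate qubits have disjoint backward light-cones.**
Let `x 0 < x 1 < ⋯ < x (k−1)` be integers, and for each `i` let `S i` and `T i`
be integer intervals containing `x i` (the forward and backward light-cones),
with the duality `x j ∈ T i ↔ x i ∈ S j`.  If the `S i` are pairwise disjoint,
then the `T i` for `i` in odd (1-based) positions, i.e. `i % 2 = 0` in 0-based
indexing, are pairwise disjoint. -/
theorem stmt7 (k : ℕ) (hk : 1 ≤ k) (x : Fin k → ℤ) (hx : StrictMono x)
    (S T : Fin k → Set ℤ)
    (hS : ∀ i, ∃ a b : ℤ, S i = Set.Icc a b)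
    (hT : ∀ i, ∃ a b : ℤ, T i = Set.Icc a b)
    (hxS : ∀ i, x i ∈ S i) (hxT : ∀ i, x i ∈ T i)
    (hdual : ∀ i j, x j ∈ T i ↔ x i ∈ S j)
    (hSdisj : Pairwise fun i j => Disjoint (S i) (S j)) :
    ∀ i j : Fin k, i ≠ j → i.val % 2 = 0 → j.val % 2 = 0 →
      Disjoint (T i) (T j) := by
  have key : ∀ i j : Fin k, i < j → i.val % 2 = 0 → j.val % 2 = 0 →
      Disjoint (T i) (T j) := by
    intro i j hij hi hj
    rw [Set.disjoint_left]
    intro z hzi hzj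
    have hlt : i.val < j.val := hij
    have hmlt : i.val + 1 < j.val := by omega
    set m : Fin k := ⟨i.val + 1, lt_trans hmlt j.isLt⟩ with hm
    have him : i < m := by
      simp only [Fin.lt_def, hm]; omega
    have hmj : m < j := hmlt
    have hxim : x i < x m := hx him
    have hxmj : x m < x j := hx hmj
    obtain ⟨a, b, hTi⟩ := hT i
    obtain ⟨c, d, hTj⟩ := hT j
    have hmem : x m ∈ T i ∨ x m ∈ T j := by
      rcases le_or_gt (x m) z with h | h
      · left
        rw [hTi] at hzi ⊢
        have hxi := hxT i; rw [hTi] at hxi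
        exact ⟨le_trans hxi.1 hxim.le, le_trans h hzi.2⟩
      · right
        rw [hTj] at hzj ⊢
        have hxj := hxT j; rw [hTj] at hxj
        exact ⟨le_trans hzj.1 h.le, le_trans hxmj.le hxj.2⟩
    rcases hmem with h | h
    · have hSi : x i ∈ S m := (hdual i m).mp h
      have hne : i ≠ m := ne_of_lt him
      exact Set.disjoint_left.mp (hSdisj hne) (hxS i) hSi
    · have hSj : x j ∈ S m := (hdual j m).mp h
      have hne : j ≠ m := ne_of_gt hmj
      exact Set.disjoint_left.mp (hSdisj hne) (hxS j) hSj
  intro i j hne hi hj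
  rcases lt_or_gt_of_ne hne with h | h
  · exact key i j h hi hj
  · exact (key j i h hj hi).symm
end

section
/- Let Π be an N×N complex matrix satisfying Π = Π† = Π² (an orthogonal projection), let Λ = I − 2Π, and let ρ be an N×N Hermitian complex matrix. Then ‖ΛρΛ − ρ‖₁ ≤ 4‖Πρ‖₁, where ‖·‖₁ denotes the trace norm (the sum of the singular values). -/
open Matrix
open scoped ComplexOrder

/-- The positive semidefinite square root of a positive semidefinite matrix
(the definition of `Matrix.PosSemidef.sqrt` in the older Mathlib, since removed). -/
noncomputable def posSemidefSqrtOld {n 𝕜 : Type*} [Fintype n] [RCLike 𝕜] [DecidableEq n]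
    {A : Matrix n n 𝕜} (hA : A.PosSemidef) : Matrix n n 𝕜 :=
  (hA.1.eigenvectorUnitary : Matrix n n 𝕜) * diagonal ((↑) ∘ (√·) ∘ hA.1.eigenvalues) *
    (star hA.1.eigenvectorUnitary : Matrix n n 𝕜)

/-- The trace norm `‖M‖₁ = Tr √(Mᴴ M)` of a complex square matrix,
i.e. the sum of its singular values. -/
noncomputable def traceNorm {N : ℕ} (M : Matrix (Fin N) (Fin N) ℂ) : ℝ :=
  (posSemidefSqrtOld (Matrix.posSemidef_conjTranspose_mul_self M)).trace.re

section SqrtOld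
open scoped MatrixOrder

lemma posSemidefSqrtOld_eq_cfc {N : ℕ} {A : Matrix (Fin N) (Fin N) ℂ} (hA : A.PosSemidef) :
    posSemidefSqrtOld hA = CFC.sqrt A := by
  rw [CFC.sqrt_eq_real_sqrt A hA.nonneg, cfcₙ_eq_cfc (hf0 := Real.sqrt_zero), hA.1.cfc_eq,
    IsHermitian.cfc, Unitary.conjStarAlgAut_apply]
  rfl

lemma posSemidef_sqrtOld {N : ℕ} {A : Matrix (Fin N) (Fin N) ℂ} (hA : A.PosSemidef) :
    (posSemidefSqrtOld hA).PosSemidef := by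
  rw [posSemidefSqrtOld_eq_cfc]
  exact (CFC.sqrt_nonneg A).posSemidef

lemma sqrtOld_mul_self {N : ℕ} {A : Matrix (Fin N) (Fin N) ℂ} (hA : A.PosSemidef) :
    posSemidefSqrtOld hA * posSemidefSqrtOld hA = A := by
  rw [posSemidefSqrtOld_eq_cfc]
  exact CFC.sqrt_mul_sqrt_self A hA.nonneg

lemma eq_sqrtOld_of_sq_eq {N : ℕ} {A B : Matrix (Fin N) (Fin N) ℂ} (hB : B.PosSemidef)
    (hA : A.PosSemidef) (h : B ^ 2 = A) : B = posSemidefSqrtOld hA := by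
  rw [posSemidefSqrtOld_eq_cfc]
  exact ((CFC.sqrt_eq_iff A B hA.nonneg hB.nonneg).mpr (by rw [← pow_two, h])).symm

end SqrtOld

example {c : ℝ} (hc : 0 ≤ c) (z : ℂ) (hz : 0 ≤ z) : 0 ≤ (c:ℂ) * z := by
  exact mul_nonneg (by exact_mod_cast hc) hz

lemma psd_smul {N : ℕ} {Q : Matrix (Fin N) (Fin N) ℂ} (hQ : Q.PosSemidef) {c : ℝ} (hc : 0 ≤ c) :
    ((c : ℂ) • Q).PosSemidef := by
  refine posSemidef_iff_dotProduct_mulVec.mpr ⟨?_, ?_⟩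
  · unfold Matrix.IsHermitian
    rw [conjTranspose_smul, hQ.1.eq]
    norm_num
  · intro x
    rw [smul_mulVec, dotProduct_smul, smul_eq_mul]
    exact mul_nonneg (by exact_mod_cast hc) (hQ.dotProduct_mulVec_nonneg x)

lemma abs_dot_le {N : ℕ} (X : Matrix (Fin N) (Fin N) ℂ)
    (hX : ((1 : Matrix (Fin N) (Fin N) ℂ) - Xᴴ * X).PosSemidef) (a : Fin N → ℂ) :
    ‖star a ⬝ᵥ (X *ᵥ a)‖ ≤ (star a ⬝ᵥ a).re := by
  set b := X *ᵥ a with hb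
  have key : star b ⬝ᵥ b ≤ star a ⬝ᵥ a := by
    have h := hX.dotProduct_mulVec_nonneg a
    rw [sub_mulVec, dotProduct_sub, one_mulVec, ← mulVec_mulVec,
      dotProduct_mulVec, ← star_mulVec, sub_nonneg] at h
    exact h
  set a' : EuclideanSpace ℂ (Fin N) := (WithLp.equiv 2 _).symm a with ha'
  set b' : EuclideanSpace ℂ (Fin N) := (WithLp.equiv 2 _).symm b with hb'
  have hinner : (inner ℂ a' b' : ℂ) = star a ⬝ᵥ b := by
    rw [ha', hb']; exact dotProduct_comm _ _
  have hna : (star a ⬝ᵥ a).re = ‖a'‖ ^ 2 := by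
    have : (inner ℂ a' a' : ℂ) = star a ⬝ᵥ a := by
      rw [ha']; exact dotProduct_comm _ _
    rw [← this]; exact_mod_cast congrArg Complex.re (inner_self_eq_norm_sq_to_K _)
  have hnb : (star b ⬝ᵥ b).re = ‖b'‖ ^ 2 := by
    have : (inner ℂ b' b' : ℂ) = star b ⬝ᵥ b := by
      rw [hb']; exact dotProduct_comm _ _
    rw [← this]; exact_mod_cast congrArg Complex.re (inner_self_eq_norm_sq_to_K _)
  have hle : ‖b'‖ ≤ ‖a'‖ := by
    have h2 : ‖b'‖ ^ 2 ≤ ‖a'‖ ^ 2 := by rw [← hna, ← hnb]; exact (Complex.le_def.mp key).1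
    nlinarith [norm_nonneg a', norm_nonneg b']
  calc ‖star a ⬝ᵥ b‖ = ‖(inner ℂ a' b' : ℂ)‖ := by rw [hinner]
    _ ≤ ‖a'‖ * ‖b'‖ := norm_inner_le_norm a' b'
    _ ≤ ‖a'‖ * ‖a'‖ := by nlinarith [norm_nonneg a']
    _ = (star a ⬝ᵥ a).re := by rw [hna]; ring

lemma trace_contraction_le {N : ℕ} (X S : Matrix (Fin N) (Fin N) ℂ)
    (hS : S.PosSemidef) (hX : ((1 : Matrix (Fin N) (Fin N) ℂ) - Xᴴ * X).PosSemidef) :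
    ‖(X * S).trace‖ ≤ S.trace.re := by
  obtain ⟨T, hT, hTT⟩ : ∃ T : Matrix (Fin N) (Fin N) ℂ, T.PosSemidef ∧ T * T = S :=
    ⟨posSemidefSqrtOld hS, posSemidef_sqrtOld hS, sqrtOld_mul_self hS⟩
  have h1 : (X * S).trace = (T * X * T).trace := by
    rw [← hTT, ← mul_assoc, trace_mul_comm, ← mul_assoc]
  have hdiag : ∀ i, (T * X * T) i i = star (fun j => T j i) ⬝ᵥ (X *ᵥ fun j => T j i) := by
    intro i
    simp only [mul_apply, mulVec, dotProduct, Pi.star_apply, hT.1.apply, Finset.sum_mul,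
      Finset.mul_sum, mul_assoc]
    rw [Finset.sum_comm]
  have h3 : ∀ i, (star (fun j => T j i) ⬝ᵥ (fun j => T j i)) = S i i := by
    intro i
    simp only [dotProduct, Pi.star_apply, hT.1.apply, ← hTT, mul_apply]
  rw [h1, Matrix.trace]
  refine (norm_sum_le _ _).trans ?_
  have : S.trace.re = ∑ i, (S i i).re := by
    rw [Matrix.trace]; exact Complex.re_sum _ _
  rw [this]
  refine Finset.sum_le_sum fun i _ => ?_
  rw [Matrix.diag_apply, hdiag i, ← h3 i]
  exact abs_dot_le X hX _

lemma abs_trace_unitary_mul_le {N : ℕ} (V C : Matrix (Fin N) (Fin N) ℂ)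
    (hV : Vᴴ * V = 1) :
    ‖(V * C).trace‖ ≤ traceNorm C := by
  have hC := Matrix.posSemidef_conjTranspose_mul_self C
  set Q := posSemidefSqrtOld hC with hQdef
  have hQ : Q.PosSemidef := posSemidef_sqrtOld hC
  have hQQ : Q * Q = Cᴴ * C := sqrtOld_mul_self hC
  have key : ∀ δ : ℝ, 0 < δ →
      ‖(V * C).trace‖ ≤ traceNorm C + δ * N := by
    intro δ hδ
    set S : Matrix (Fin N) (Fin N) ℂ := Q + (δ : ℂ) • 1 with hSdef
    have hSpd : S.PosDef := by
      refine Matrix.PosDef.posSemidef_add hQ ?_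
      rw [smul_one_eq_diagonal]
      exact Matrix.PosDef.diagonal fun i => by
        simpa using (Complex.zero_lt_real.mpr hδ)
    have hSherm : S.IsHermitian := hSpd.isHermitian
    have hdet : IsUnit S.det := isUnit_iff_ne_zero.mpr (ne_of_gt hSpd.det_pos)
    set W : Matrix (Fin N) (Fin N) ℂ := C * S⁻¹ with hWdef
    have hWS : W * S = C := Matrix.nonsing_inv_mul_cancel_right S C hdet
    have hSinvherm : (S⁻¹).IsHermitian := hSherm.inv
    have hWW : Wᴴ * W = S⁻¹ * (Q * Q) * S⁻¹ := by
      rw [hWdef, conjTranspose_mul, hSinvherm.eq, hQQ]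
      noncomm_ring
    have hmid : S * S - Q * Q = ((δ : ℂ) • Q + ((δ : ℂ) • Q + ((δ*δ : ℝ) : ℂ) • 1)) := by
      rw [hSdef]
      push_cast
      rw [add_mul, mul_add, mul_add, smul_mul_assoc, mul_smul_comm, mul_smul_comm,
        smul_mul_assoc, one_mul, mul_one, smul_smul]
      simp only [mul_one, one_mul]
      abel
    have hmidpsd : (S * S - Q * Q).PosSemidef := by
      rw [hmid]
      exact (psd_smul hQ hδ.le).add ((psd_smul hQ hδ.le).add
        (psd_smul Matrix.PosSemidef.one (by positivity)))
    have hone : S⁻¹ * (S * S) * S⁻¹ = 1 := by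
      rw [← mul_assoc, Matrix.nonsing_inv_mul S hdet, one_mul,
        Matrix.mul_nonsing_inv S hdet]
    have hcontr : ((1 : Matrix (Fin N) (Fin N) ℂ) - (V * W)ᴴ * (V * W)).PosSemidef := by
      have h1 : (V * W)ᴴ * (V * W) = Wᴴ * W := by
        rw [conjTranspose_mul, mul_assoc, ← mul_assoc Vᴴ, hV, one_mul]
      have h2 : (1 : Matrix (Fin N) (Fin N) ℂ) - (V * W)ᴴ * (V * W)
          = (S⁻¹)ᴴ * (S * S - Q * Q) * S⁻¹ := by
        rw [h1, hWW, hSinvherm.eq, ← hone]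
        noncomm_ring
      rw [h2]
      exact hmidpsd.conjTranspose_mul_mul_same _
    have hbound := trace_contraction_le (V * W) S hSpd.posSemidef hcontr
    have htr : (V * C).trace = ((V * W) * S).trace := by rw [mul_assoc, hWS]
    have hStr : S.trace.re = traceNorm C + δ * N := by
      rw [hSdef, trace_add, trace_smul, trace_one, Complex.add_re]
      simp [traceNorm, hQdef, mul_comm]
    rw [htr]
    rw [hStr] at hbound
    exact hbound
  refine le_of_forall_pos_le_add fun ε hε => ?_
  have hδ : (0:ℝ) < ε / (N + 1) := by positivity
  refine (key _ hδ).trans ?_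
  have : ε / (N + 1) * N ≤ ε := by
    rw [div_mul_eq_mul_div, div_le_iff₀ (by positivity)]
    nlinarith
  linarith

lemma exists_unitary_trace_eq {N : ℕ} {M : Matrix (Fin N) (Fin N) ℂ} (hM : M.IsHermitian) :
    ∃ V : Matrix (Fin N) (Fin N) ℂ, Vᴴ * V = 1 ∧ traceNorm M = ((V * M).trace).re := by
  set U : Matrix (Fin N) (Fin N) ℂ := (hM.eigenvectorUnitary : Matrix (Fin N) (Fin N) ℂ) with hU
  have hU1 : Uᴴ * U = 1 := by
    rw [← star_eq_conjTranspose]; exact Unitary.coe_star_mul_self hM.eigenvectorUnitary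
  have hU2 : U * Uᴴ = 1 := by
    rw [← star_eq_conjTranspose]; exact Unitary.coe_mul_star_self hM.eigenvectorUnitary
  set lam := hM.eigenvalues with hlam
  set s : Fin N → ℂ := fun i => if 0 ≤ lam i then 1 else -1 with hs
  have conj_mul : ∀ d e : Fin N → ℂ,
      (U * diagonal d * Uᴴ) * (U * diagonal e * Uᴴ) = U * diagonal (d * e) * Uᴴ := by
    intro d e
    simp only [mul_assoc]
    rw [← mul_assoc Uᴴ U, hU1, one_mul, ← mul_assoc (diagonal d), diagonal_mul_diagonal]
    rfl
  have conjT : ∀ d : Fin N → ℂ, (U * diagonal d * Uᴴ)ᴴ = U * diagonal (star d) * Uᴴ := by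
    intro d
    simp [conjTranspose_mul, diagonal_conjTranspose, mul_assoc]
  set V := U * diagonal s * Uᴴ with hV
  have hMspec : M = U * diagonal (fun i => (lam i : ℂ)) * Uᴴ := by
    have := hM.spectral_theorem
    rw [Unitary.conjStarAlgAut_apply, star_eq_conjTranspose] at this
    exact this
  have hVu : Vᴴ * V = 1 := by
    rw [hV, conjT, conj_mul]
    have h1 : (star s) * s = fun _ => 1 := by
      funext i
      simp only [Pi.mul_apply, Pi.star_apply, hs]
      split_ifs <;> simp
    rw [h1, diagonal_one, mul_one, hU2]
  have habs : s * (fun i => (lam i : ℂ)) = fun i => ((|lam i| : ℝ) : ℂ) := by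
    funext i
    simp only [Pi.mul_apply, hs]
    split_ifs with h
    · rw [one_mul, abs_of_nonneg h]
    · rw [abs_of_neg (lt_of_not_ge h)]
      push_cast
      ring
  have hVM : V * M = U * diagonal (fun i => ((|lam i| : ℝ) : ℂ)) * Uᴴ := by
    rw [hV, hMspec, conj_mul, habs]
  have hVMpsd : (V * M).PosSemidef := by
    rw [hVM]
    exact (Matrix.PosSemidef.diagonal fun i =>
      Complex.zero_le_real.mpr (abs_nonneg _)).mul_mul_conjTranspose_same U
  have habs2 : (fun i => ((|lam i| : ℝ) : ℂ)) * (fun i => ((|lam i| : ℝ) : ℂ))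
      = (fun i => (lam i : ℂ)) * (fun i => (lam i : ℂ)) := by
    funext i
    simp only [Pi.mul_apply]
    rw [← Complex.ofReal_mul, ← Complex.ofReal_mul, abs_mul_abs_self]
  have hsq : (V * M) ^ 2 = Mᴴ * M := by
    rw [pow_two, hVM, conj_mul, habs2, hM.eq]
    conv_rhs => rw [hMspec]
    rw [conj_mul]
  have hfin : V * M = posSemidefSqrtOld (Matrix.posSemidef_conjTranspose_mul_self M) :=
    eq_sqrtOld_of_sq_eq hVMpsd (Matrix.posSemidef_conjTranspose_mul_self M) hsq
  exact ⟨V, hVu, by rw [traceNorm, ← hfin]⟩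

/-- **Erasure inequality for a CZ-type reflection.**
If `P` is an orthogonal projection (`P = Pᴴ = P²`), `Λ = I - 2P`, and `ρ` is
Hermitian, then `‖ΛρΛ - ρ‖₁ ≤ 4‖Pρ‖₁`. -/
theorem stmt8 (N : ℕ) (P ρ : Matrix (Fin N) (Fin N) ℂ)
    (hPherm : Pᴴ = P) (hPidem : P * P = P) (hρ : ρ.IsHermitian) :
    traceNorm ((1 - (2 : ℂ) • P) * ρ * (1 - (2 : ℂ) • P) - ρ) ≤
      4 * traceNorm (P * ρ) := by
  set Λ : Matrix (Fin N) (Fin N) ℂ := 1 - (2 : ℂ) • P with hΛ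
  have hΛherm : Λᴴ = Λ := by
    rw [hΛ, conjTranspose_sub, conjTranspose_smul, conjTranspose_one, hPherm]
    norm_num
  have hΛ2 : Λ * Λ = 1 := by
    rw [hΛ]
    simp only [sub_mul, mul_sub, one_mul, mul_one, smul_mul_assoc, mul_smul_comm,
      smul_smul, smul_sub, hPidem]
    module
  have hMherm : ((Λ * ρ * Λ - ρ)).IsHermitian := by
    have h : (Λ * ρ * Λ - ρ)ᴴ = Λ * ρ * Λ - ρ := by
      rw [conjTranspose_sub, conjTranspose_mul, conjTranspose_mul, hΛherm, hρ.eq, mul_assoc]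
    exact h
  have hdecomp : Λ * ρ * Λ - ρ = (-2 : ℂ) • (P * ρ * Λ) + (-2 : ℂ) • (ρ * P) := by
    rw [hΛ]
    simp only [sub_mul, mul_sub, one_mul, mul_one, smul_mul_assoc, mul_smul_comm,
      smul_smul, smul_sub, mul_assoc]
    module
  obtain ⟨V, hVu, htr⟩ := exists_unitary_trace_eq hMherm
  have hVu2 : V * Vᴴ = 1 := mul_eq_one_comm.mp hVu
  have hA : ‖(V * ((-2 : ℂ) • (P * ρ * Λ))).trace‖ ≤ 2 * traceNorm (P * ρ) := by
    have h1 : (V * ((-2 : ℂ) • (P * ρ * Λ))).trace = (-2 : ℂ) * ((Λ * V) * (P * ρ)).trace := by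
      rw [mul_smul_comm, trace_smul, smul_eq_mul]
      congr 1
      rw [show V * (P * ρ * Λ) = (V * (P * ρ)) * Λ by noncomm_ring, trace_mul_comm, ← mul_assoc]
    have hu : (Λ * V)ᴴ * (Λ * V) = 1 := by
      rw [conjTranspose_mul, hΛherm, mul_assoc, ← mul_assoc Λ, hΛ2, one_mul, hVu]
    have hb := abs_trace_unitary_mul_le (Λ * V) (P * ρ) hu
    rw [h1, norm_mul]
    have h2 : ‖(-2 : ℂ)‖ = 2 := by norm_num
    rw [h2]
    linarith
  have hB : ‖(V * ((-2 : ℂ) • (ρ * P))).trace‖ ≤ 2 * traceNorm (P * ρ) := by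
    have h1 : (V * ((-2 : ℂ) • (ρ * P))).trace = (-2 : ℂ) * (V * (ρ * P)).trace := by
      rw [mul_smul_comm, trace_smul, smul_eq_mul]
    have h2 : (Vᴴ * (P * ρ)).trace = star ((V * (ρ * P)).trace) := by
      rw [← trace_conjTranspose]
      have h3 : (V * (ρ * P))ᴴ = (P * ρ) * Vᴴ := by
        rw [conjTranspose_mul, conjTranspose_mul, hPherm, hρ.eq]
      rw [h3, trace_mul_comm]
    have hu : (Vᴴ)ᴴ * Vᴴ = 1 := by rw [conjTranspose_conjTranspose, hVu2]
    have hb := abs_trace_unitary_mul_le Vᴴ (P * ρ) hu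
    have h4 : ‖(V * (ρ * P)).trace‖ ≤ traceNorm (P * ρ) := by
      have : ‖(Vᴴ * (P * ρ)).trace‖ = ‖(V * (ρ * P)).trace‖ := by
        rw [h2]
        exact norm_star _
      linarith [hb, this.symm.le]
    rw [h1, norm_mul]
    have h5 : ‖(-2 : ℂ)‖ = 2 := by norm_num
    rw [h5]
    linarith
  rw [htr]
  have hsplit : V * (Λ * ρ * Λ - ρ)
      = V * ((-2 : ℂ) • (P * ρ * Λ)) + V * ((-2 : ℂ) • (ρ * P)) := by
    rw [hdecomp, mul_add]
  rw [hsplit, trace_add, Complex.add_re]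
  have r1 := Complex.re_le_norm ((V * ((-2 : ℂ) • (P * ρ * Λ))).trace)
  have r2 := Complex.re_le_norm ((V * ((-2 : ℂ) • (ρ * P))).trace)
  linarith
end

section
/- Let m ≥ 1 and k ≥ 0 be integers, let S ⊆ [m], let h : {−1,1}^m → {−1,1}, and let f, F : {−1,1}^m → [−1,1]. Then |E_x[F(x)·h(x)]| ≤ E_{z}[ √(W^{≤k}[h|_{S,z}]) + √(W^{>k}[f|_{S,z}]) ] + ‖f − F‖₂, where x is uniform on {−1,1}^m and z is uniform on {−1,1}^S. -/
/-- The `±1` value encoded by a Boolean: `true ↦ 1`, `false ↦ -1`. -/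
def pmOfBool (b : Bool) : ℝ := if b then 1 else -1

/-- The Fourier character `χ_T(x) = ∏_{i ∈ T} x_i` on the Boolean cube
(points of `{−1,1}^ι` encoded as `ι → Bool`). -/
def chi {ι : Type*} (T : Finset ι) (x : ι → Bool) : ℝ := ∏ i ∈ T, pmOfBool (x i)

/-- The Fourier coefficient `f̂(T) = E_x[f(x)·χ_T(x)]`. -/
noncomputable def fCoeff {ι : Type*} [Fintype ι] [DecidableEq ι]
    (f : (ι → Bool) → ℝ) (T : Finset ι) : ℝ :=
  (∑ x, f x * chi T x) / (Fintype.card (ι → Bool) : ℝ)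

/-- The Fourier weight of `f` at levels `≤ k`: `W^{≤k}[f] = Σ_{|T| ≤ k} f̂(T)²`. -/
noncomputable def weightLE {ι : Type*} [Fintype ι] [DecidableEq ι]
    (k : ℕ) (f : (ι → Bool) → ℝ) : ℝ :=
  ∑ T ∈ Finset.univ.filter (fun T : Finset ι => T.card ≤ k), (fCoeff f T) ^ 2

/-- The Fourier weight of `f` at levels `> k`: `W^{>k}[f] = Σ_{|T| > k} f̂(T)²`. -/
noncomputable def weightGT {ι : Type*} [Fintype ι] [DecidableEq ι]
    (k : ℕ) (f : (ι → Bool) → ℝ) : ℝ :=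
  ∑ T ∈ Finset.univ.filter (fun T : Finset ι => k < T.card), (fCoeff f T) ^ 2

/-- The (normalized) 2-norm `‖f‖₂ = (E_x[f(x)²])^{1/2}`. -/
noncomputable def l2norm {ι : Type*} [Fintype ι] [DecidableEq ι]
    (f : (ι → Bool) → ℝ) : ℝ :=
  Real.sqrt ((∑ x, (f x) ^ 2) / (Fintype.card (ι → Bool) : ℝ))

/-- The restriction `f|_{S,z}` of `f` obtained by fixing the coordinates in `S`
to the assignment `z`, viewed as a function of the remaining coordinates. -/
def restrictTo {ι : Type*} [Fintype ι] [DecidableEq ι] (f : (ι → Bool) → ℝ)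
    (S : Finset ι) (z : {i // i ∈ S} → Bool) : ({i // i ∉ S} → Bool) → ℝ :=
  fun y => f fun i => if h : i ∈ S then z ⟨i, h⟩ else y ⟨i, h⟩



section Aux
variable {ι : Type*} [Fintype ι] [DecidableEq ι]

lemma abs_sum_mul_le {α : Type*} (s : Finset α) (f g : α → ℝ) :
    |∑ i ∈ s, f i * g i| ≤ Real.sqrt (∑ i ∈ s, f i ^ 2) * Real.sqrt (∑ i ∈ s, g i ^ 2) := by
  rw [← Real.sqrt_sq_eq_abs, ← Real.sqrt_mul (by positivity)]
  exact Real.sqrt_le_sqrt (Finset.sum_mul_sq_le_sq_mul_sq s f g)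

lemma pm_mul_pm (a b : Bool) :
    pmOfBool a * pmOfBool b + 1 = if a = b then 2 else 0 := by
  cases a <;> cases b <;> norm_num [pmOfBool]

lemma sum_chi_mul_chi (x y : ι → Bool) :
    ∑ T : Finset ι, chi T x * chi T y =
      if x = y then (Fintype.card (ι → Bool) : ℝ) else 0 := by
  have key : ∀ T : Finset ι, chi T x * chi T y = ∏ i ∈ T, (pmOfBool (x i) * pmOfBool (y i)) := by
    intro T; rw [chi, chi, Finset.prod_mul_distrib]
  simp_rw [key]
  have := Finset.prod_add (fun i => pmOfBool (x i) * pmOfBool (y i)) (fun _ => (1:ℝ)) Finset.univ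
  simp only [Finset.prod_const_one, mul_one, Finset.powerset_univ] at this
  rw [← this]
  simp_rw [pm_mul_pm]
  by_cases hxy : x = y
  · subst hxy
    simp [Fintype.card_fun]
  · obtain ⟨i, hi⟩ : ∃ i, x i ≠ y i := by
      by_contra hc; push_neg at hc; exact hxy (funext hc)
    rw [if_neg hxy]
    exact Finset.prod_eq_zero (Finset.mem_univ i) (by simp [hi])

lemma parseval' (f g : (ι → Bool) → ℝ) :
    ∑ T : Finset ι, (∑ x, f x * chi T x) * (∑ y, g y * chi T y) =
      (∑ x, f x * g x) * (Fintype.card (ι → Bool) : ℝ) := by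
  simp_rw [Finset.sum_mul_sum]
  rw [Finset.sum_comm]
  have : ∀ x : ι → Bool, (∑ T : Finset ι, ∑ y, f x * chi T x * (g y * chi T y)) =
      ∑ y, f x * g y * ∑ T : Finset ι, chi T x * chi T y := by
    intro x
    rw [Finset.sum_comm]
    congr 1; funext y
    rw [Finset.mul_sum]
    congr 1; funext T
    ring
  simp_rw [this, sum_chi_mul_chi]
  simp [mul_ite, Finset.sum_ite_eq, Finset.sum_mul]

lemma parseval (f g : (ι → Bool) → ℝ) :
    ∑ T : Finset ι, fCoeff f T * fCoeff g T =
      (∑ x, f x * g x) / (Fintype.card (ι → Bool) : ℝ) := by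
  have hN : (0:ℝ) < (Fintype.card (ι → Bool) : ℝ) := by
    exact_mod_cast Fintype.card_pos
  simp_rw [fCoeff, div_mul_div_comm, ← Finset.sum_div]
  rw [parseval']
  field_simp

lemma corr_bound (k : ℕ) (g h : (ι → Bool) → ℝ) (hh : ∀ x, h x = 1 ∨ h x = -1)
    (hg : ∀ x, |g x| ≤ 1) :
    |(∑ y, g y * h y) / (Fintype.card (ι → Bool) : ℝ)| ≤
      Real.sqrt (weightLE k h) + Real.sqrt (weightGT k g) := by
  have hN : (0:ℝ) < (Fintype.card (ι → Bool) : ℝ) := by exact_mod_cast Fintype.card_pos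
  have hgsum : ∑ T : Finset ι, (fCoeff g T) ^ 2 ≤ 1 := by
    have := parseval g g
    simp_rw [← sq] at this
    rw [this, div_le_one hN]
    calc ∑ x, g x ^ 2 ≤ ∑ x : ι → Bool, 1 := by
          apply Finset.sum_le_sum; intro x _
          nlinarith [hg x, abs_nonneg (g x), sq_abs (g x)]
      _ = (Fintype.card (ι → Bool) : ℝ) := by simp
  have hhsum : ∑ T : Finset ι, (fCoeff h T) ^ 2 = 1 := by
    have := parseval h h
    simp_rw [← sq] at this
    rw [this]
    have : ∀ x : ι → Bool, h x ^ 2 = 1 := by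
      intro x; rcases hh x with h1 | h1 <;> rw [h1] <;> norm_num
    simp [this, div_self hN.ne']
  rw [← parseval, ← Finset.sum_filter_add_sum_filter_not Finset.univ (fun T : Finset ι => T.card ≤ k)]
  refine le_trans (abs_add_le _ _) (add_le_add ?_ ?_)
  · calc |∑ T ∈ Finset.univ.filter (fun T : Finset ι => T.card ≤ k), fCoeff g T * fCoeff h T|
        ≤ Real.sqrt (∑ T ∈ Finset.univ.filter (fun T : Finset ι => T.card ≤ k), (fCoeff g T) ^ 2) *
          Real.sqrt (∑ T ∈ Finset.univ.filter (fun T : Finset ι => T.card ≤ k), (fCoeff h T) ^ 2) :=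
          abs_sum_mul_le _ _ _
      _ ≤ 1 * Real.sqrt (weightLE k h) := by
          rw [weightLE]
          gcongr
          rw [show (1:ℝ) = Real.sqrt 1 from (Real.sqrt_one).symm]
          apply Real.sqrt_le_sqrt
          refine le_trans ?_ hgsum
          exact Finset.sum_le_sum_of_subset_of_nonneg (Finset.filter_subset _ _)
            (fun _ _ _ => sq_nonneg _)
      _ = Real.sqrt (weightLE k h) := one_mul _
  · calc |∑ T ∈ Finset.univ.filter (fun T : Finset ι => ¬ T.card ≤ k), fCoeff g T * fCoeff h T|
        ≤ Real.sqrt (∑ T ∈ Finset.univ.filter (fun T : Finset ι => ¬ T.card ≤ k), (fCoeff g T) ^ 2) *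
          Real.sqrt (∑ T ∈ Finset.univ.filter (fun T : Finset ι => ¬ T.card ≤ k), (fCoeff h T) ^ 2) :=
          abs_sum_mul_le _ _ _
      _ ≤ Real.sqrt (weightGT k g) * 1 := by
          have hfe : Finset.univ.filter (fun T : Finset ι => ¬ T.card ≤ k) =
              Finset.univ.filter (fun T : Finset ι => k < T.card) := by
            simp [not_le]
          rw [hfe, weightGT]
          gcongr
          rw [show (1:ℝ) = Real.sqrt 1 from (Real.sqrt_one).symm]
          apply Real.sqrt_le_sqrt
          rw [← hhsum]
          exact Finset.sum_le_sum_of_subset_of_nonneg (Finset.filter_subset _ _)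
            (fun _ _ _ => sq_nonneg _)
      _ = Real.sqrt (weightGT k g) := mul_one _

end Aux

/-- **Correlation bound via restrictions.**
For `h : {−1,1}^m → {−1,1}` and `f, F : {−1,1}^m → [−1,1]`,
`|E_x[F(x)h(x)]| ≤ E_z[√(W^{≤k}[h|_{S,z}]) + √(W^{>k}[f|_{S,z}])] + ‖f − F‖₂`,
where `z` ranges uniformly over assignments to the coordinates in `S`. -/
theorem stmt13 (m k : ℕ) (hm : 1 ≤ m) (S : Finset (Fin m))
    (h : (Fin m → Bool) → ℝ) (hh : ∀ x, h x = 1 ∨ h x = -1)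
    (f F : (Fin m → Bool) → ℝ) (hf : ∀ x, |f x| ≤ 1) (hF : ∀ x, |F x| ≤ 1) :
    |(∑ x, F x * h x) / (Fintype.card (Fin m → Bool) : ℝ)| ≤
      (∑ z : {i // i ∈ S} → Bool,
          (Real.sqrt (weightLE k (restrictTo h S z)) +
            Real.sqrt (weightGT k (restrictTo f S z)))) /
        (Fintype.card ({i // i ∈ S} → Bool) : ℝ) +
      l2norm (fun x => f x - F x) := by
  set N : ℝ := (Fintype.card (Fin m → Bool) : ℝ) with hNdef
  set NZ : ℝ := (Fintype.card ({i // i ∈ S} → Bool) : ℝ) with hNZdef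
  set NY : ℝ := (Fintype.card ({i // i ∉ S} → Bool) : ℝ) with hNYdef
  have hN : (0:ℝ) < N := Nat.cast_pos.mpr Fintype.card_pos
  have hNZ : (0:ℝ) < NZ := Nat.cast_pos.mpr Fintype.card_pos
  have hNY : (0:ℝ) < NY := Nat.cast_pos.mpr Fintype.card_pos
  set e : (Fin m → Bool) ≃ ({i // i ∈ S} → Bool) × ({i // i ∉ S} → Bool) :=
    Equiv.piEquivPiSubtypeProd (fun i => i ∈ S) (fun _ => Bool) with he
  have hNcard : N = NZ * NY := by
    rw [hNdef, hNZdef, hNYdef, Fintype.card_congr e, Fintype.card_prod]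
    push_cast; ring
  have key : ∀ G : (Fin m → Bool) → ℝ,
      ∑ x, G x = ∑ z : {i // i ∈ S} → Bool, ∑ y : {i // i ∉ S} → Bool, G (e.symm (z, y)) := by
    intro G
    rw [← Equiv.sum_comp e.symm G, Fintype.sum_prod_type]
  -- triangle inequality
  have hsplit : (∑ x, F x * h x) / N =
      (∑ x, (F x - f x) * h x) / N + (∑ x, f x * h x) / N := by
    rw [← add_div]
    congr 1
    rw [← Finset.sum_add_distrib]
    exact Finset.sum_congr rfl fun x _ => by ring
  rw [hsplit]
  refine le_trans (abs_add_le _ _) ?_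
  rw [add_comm]
  refine add_le_add ?_ ?_
  · -- second correlation term
    have step : ∀ z : {i // i ∈ S} → Bool,
        |(∑ y, restrictTo f S z y * restrictTo h S z y) / NY| ≤
          Real.sqrt (weightLE k (restrictTo h S z)) +
            Real.sqrt (weightGT k (restrictTo f S z)) := by
      intro z
      exact corr_bound k (restrictTo f S z) (restrictTo h S z)
        (fun y => hh _) (fun y => hf _)
    calc |(∑ x, f x * h x) / N|
        = |∑ z : {i // i ∈ S} → Bool,
            ∑ y : {i // i ∉ S} → Bool, restrictTo f S z y * restrictTo h S z y| / N := by
          rw [key (fun x => f x * h x)]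
          rw [abs_div, abs_of_pos hN]
          rfl
      _ ≤ (∑ z : {i // i ∈ S} → Bool,
            |∑ y : {i // i ∉ S} → Bool, restrictTo f S z y * restrictTo h S z y|) / N := by
          gcongr
          exact Finset.abs_sum_le_sum_abs _ _
      _ = (∑ z : {i // i ∈ S} → Bool,
            |(∑ y : {i // i ∉ S} → Bool, restrictTo f S z y * restrictTo h S z y) / NY|) / NZ := by
          simp_rw [abs_div, abs_of_pos hNY, hNcard]
          rw [← Finset.sum_div, div_div, mul_comm NY NZ]
      _ ≤ (∑ z : {i // i ∈ S} → Bool,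
            (Real.sqrt (weightLE k (restrictTo h S z)) +
              Real.sqrt (weightGT k (restrictTo f S z)))) / NZ := by
          gcongr with z hz
          exact step z
  · -- l2 error term
    have hb : |∑ x, (F x - f x) * h x| ≤
        Real.sqrt (∑ x, (f x - F x) ^ 2) * Real.sqrt N := by
      have := abs_sum_mul_le Finset.univ (fun x => F x - f x) h
      refine le_trans this ?_
      have h1 : ∑ x, (F x - f x) ^ 2 = ∑ x, (f x - F x) ^ 2 := by
        congr 1; funext x; ring
      have h2 : ∑ x, (h x) ^ 2 = N := by
        have : ∀ x : Fin m → Bool, h x ^ 2 = 1 := by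
          intro x; rcases hh x with h1 | h1 <;> rw [h1] <;> norm_num
        simp [this, hNdef]
      rw [h1, h2]
    rw [abs_div, abs_of_pos hN, l2norm]
    rw [Real.sqrt_div (by positivity) N]
    rw [div_le_div_iff₀ hN (Real.sqrt_pos.mpr hN)]
    calc |∑ x, (F x - f x) * h x| * Real.sqrt N
        ≤ (Real.sqrt (∑ x, (f x - F x) ^ 2) * Real.sqrt N) * Real.sqrt N := by gcongr
      _ = Real.sqrt (∑ x, (fun x => f x - F x) x ^ 2) * N := by
          rw [mul_assoc, Real.mul_self_sqrt hN.le]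
end

section
/- Let m ≥ 1 be an integer and S ⊆ [m] with |S^c| ≥ 2. Let f : {−1,1}^m → ℝ be such that for every z ∈ {−1,1}^S, the restriction f|_{S,z} depends on at most one coordinate, i.e., there exist an index i ∈ S^c and a function g : {−1,1} → ℝ with f|_{S,z}(y) = g(y_i) for all y ∈ {−1,1}^{S^c}. Then E_x[f(x)·∏_{i=1}^m x_i] = 0, and consequently for every function F : {−1,1}^m → ℝ, |E_x[F(x)·∏_{i=1}^m x_i]| ≤ ‖F − f‖₂, where x is uniform on {−1,1}^m. -/
private lemma pm_not (b : Bool) : pmOfBool (!b) = - pmOfBool b := by cases b <;> simp [pmOfBool]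
private lemma pm_sq (b : Bool) : pmOfBool b ^ 2 = 1 := by cases b <;> simp [pmOfBool]

private lemma key {κ : Type*} [Fintype κ] [DecidableEq κ] (hκ : 2 ≤ Fintype.card κ)
    (i : κ) (g : Bool → ℝ) :
    ∑ y : κ → Bool, g (y i) * ∏ j, pmOfBool (y j) = 0 := by
  obtain ⟨j, hj⟩ := Fintype.exists_ne_of_one_lt_card (by omega) i
  set flip : (κ → Bool) → (κ → Bool) := fun y => Function.update y j (!(y j)) with hflip
  have hinv : Function.Involutive flip := by
    intro y
    funext k
    rcases eq_or_ne k j with rfl | hk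
    · simp [hflip]
    · simp [hflip, Function.update_of_ne hk]
  set h : (κ → Bool) → ℝ := fun y => g (y i) * ∏ k, pmOfBool (y k) with hh
  have h1 : ∑ y, h (flip y) = ∑ y, h y := Equiv.sum_comp (hinv.toPerm flip) h
  have h2 : ∀ y, h (flip y) = - h y := by
    intro y
    have hi : flip y i = y i := Function.update_of_ne (Ne.symm hj) _ _
    have hp : ∀ k, pmOfBool (flip y k) =
        Function.update (fun k => pmOfBool (y k)) j (- pmOfBool (y j)) k := by
      intro k
      rcases eq_or_ne k j with rfl | hk
      · simp [hflip, pm_not]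
      · simp [hflip, Function.update_of_ne hk]
    have hp2 : ∏ k, pmOfBool (flip y k) = - ∏ k, pmOfBool (y k) := by
      rw [Finset.prod_congr rfl (fun k _ => hp k),
        Finset.prod_update_of_mem (Finset.mem_univ j),
        Finset.prod_eq_mul_prod_sdiff_singleton_of_mem (Finset.mem_univ j)
          (fun k => pmOfBool (y k))]
      ring
    simp only [hh, hi, hp2]
    ring
  have h3 : ∑ y, h (flip y) = - ∑ y, h y := by
    simp_rw [h2]
    exact Finset.sum_neg_distrib _
  linarith [h1, h3]

/-- **Functions that are locally almost constant have no correlation with parity.**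
If every restriction of `f` fixing the coordinates in `S` depends on at most one
remaining coordinate (and at least two coordinates remain), then `f` is
uncorrelated with the full parity `∏ᵢ xᵢ`; consequently any `F` has correlation
with parity at most `‖F − f‖₂`. -/
theorem stmt14 (m : ℕ) (hm : 1 ≤ m) (S : Finset (Fin m)) (hS : 2 ≤ Sᶜ.card)
    (f : (Fin m → Bool) → ℝ)
    (hf : ∀ z : {i // i ∈ S} → Bool, ∃ (i : {i // i ∉ S}) (g : Bool → ℝ),
      ∀ y, restrictTo f S z y = g (y i)) :
    (∑ x, f x * ∏ i, pmOfBool (x i)) / (Fintype.card (Fin m → Bool) : ℝ) = 0 ∧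
      ∀ F : (Fin m → Bool) → ℝ,
        |(∑ x, F x * ∏ i, pmOfBool (x i)) / (Fintype.card (Fin m → Bool) : ℝ)| ≤
          l2norm (fun x => F x - f x) := by
  classical
  have hcard : Fintype.card {i // i ∉ S} = Sᶜ.card := by
    simp [Fintype.card_subtype, Finset.filter_not, Finset.filter_mem_eq_inter,
      Finset.compl_eq_univ_sdiff]
  have hsum : (∑ x, f x * ∏ i, pmOfBool (x i)) = 0 := by
    rw [← Equiv.sum_comp (Equiv.piEquivPiSubtypeProd (fun i : Fin m => i ∈ S)
        (fun _ => Bool)).symm (fun x => f x * ∏ i, pmOfBool (x i)),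
      Fintype.sum_prod_type]
    set e := Equiv.piEquivPiSubtypeProd (fun i : Fin m => i ∈ S) (fun _ => Bool) with he
    have hzero : ∀ z : {i // i ∈ S} → Bool,
        ∑ y : {i // i ∉ S} → Bool,
          f (e.symm (z, y)) * ∏ i, pmOfBool (e.symm (z, y) i) = 0 := by
      intro z
      obtain ⟨i, g, hg⟩ := hf z
      have hsplit : ∀ y : {i // i ∉ S} → Bool,
          f (e.symm (z, y)) * ∏ i, pmOfBool (e.symm (z, y) i) =
          (∏ k : {i // i ∈ S}, pmOfBool (z k)) *
            (g (y i) * ∏ k : {i // i ∉ S}, pmOfBool (y k)) := by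
        intro y
        have hfv : f (e.symm (z, y)) = g (y i) := hg y
        have hprod : (∏ k, pmOfBool (e.symm (z, y) k)) =
            (∏ k : {i // i ∈ S}, pmOfBool (z k)) *
              ∏ k : {i // i ∉ S}, pmOfBool (y k) := by
          rw [← Finset.prod_mul_prod_compl S (fun k => pmOfBool (e.symm (z, y) k))]
          congr 1
          · rw [Finset.prod_subtype S (fun x => Iff.rfl)
              (fun k => pmOfBool (e.symm (z, y) k))]
            exact Finset.prod_congr rfl fun k _ => by
              simp [he, Equiv.piEquivPiSubtypeProd_symm_apply, k.2]
          · rw [Finset.prod_subtype Sᶜ (fun x => Finset.mem_compl)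
              (fun k => pmOfBool (e.symm (z, y) k))]
            exact Finset.prod_congr rfl fun k _ => by
              simp [he, Equiv.piEquivPiSubtypeProd_symm_apply, k.2]
        rw [hfv, hprod]; ring
      rw [Finset.sum_congr rfl fun y _ => hsplit y, ← Finset.mul_sum,
        key (by rw [hcard]; exact hS) i g, mul_zero]
    rw [Finset.sum_congr rfl fun z _ => hzero z, Finset.sum_const, smul_zero]
  have hN : (0 : ℝ) < (Fintype.card (Fin m → Bool) : ℝ) := by
    exact_mod_cast Fintype.card_pos
  refine ⟨by rw [hsum, zero_div], ?_⟩
  intro F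
  set N : ℝ := (Fintype.card (Fin m → Bool) : ℝ) with hNdef
  set G : (Fin m → Bool) → ℝ := fun x => F x - f x with hG
  have hFG : ∑ x, F x * ∏ i, pmOfBool (x i) = ∑ x, G x * ∏ i, pmOfBool (x i) := by
    rw [← sub_zero (∑ x, F x * ∏ i, pmOfBool (x i)), ← hsum,
      ← Finset.sum_sub_distrib]
    exact Finset.sum_congr rfl fun x _ => by simp [hG]; ring
  have hchi : ∑ x : Fin m → Bool, (∏ i, pmOfBool (x i)) ^ 2 = N := by
    have : ∀ x : Fin m → Bool, (∏ i, pmOfBool (x i)) ^ 2 = 1 := by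
      intro x
      rw [← Finset.prod_pow]
      simp [pm_sq]
    rw [Finset.sum_congr rfl fun x _ => this x]
    simp [hNdef]
  have hCS := Finset.sum_mul_sq_le_sq_mul_sq Finset.univ G
    (fun x => ∏ i, pmOfBool (x i))
  rw [hchi] at hCS
  have hG2 : (0:ℝ) ≤ ∑ x, G x ^ 2 := Finset.sum_nonneg fun x _ => sq_nonneg _
  have habs : |∑ x, G x * ∏ i, pmOfBool (x i)| ≤
      Real.sqrt ((∑ x, G x ^ 2) * N) := by
    rw [← Real.sqrt_sq_eq_abs]
    exact Real.sqrt_le_sqrt hCS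
  have hr : l2norm G = Real.sqrt ((∑ x, G x ^ 2) * N) / N := by
    rw [l2norm, ← hNdef,
      show (∑ x, G x ^ 2) / N = ((∑ x, G x ^ 2) * N) / N ^ 2 by
        field_simp,
      Real.sqrt_div (mul_nonneg hG2 hN.le), Real.sqrt_sq hN.le]
  rw [hFG, abs_div, abs_of_pos hN, hr]
  gcongr
end
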